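/- arXiv:2201.02037 — 6 statements merged into one kernel-verified Lean document; each statement's English description precedes it below -/
import Mathlib

section
/- Let f* be a maximum flow in a flow network. Let S_c be the set consisting of the source s together with all vertices W for which there exists a path from s to W that is augmenting for f*. Then S_c is a min-cut. -/
open Finset
open scoped ENNReal

/-- A flow network: a capacity function on ordered pairs of vertices
(capacity `0` meaning "no edge", `⊤` meaning infinite capacity),
together with a source `s` and a sink `t`. -/
structure FlowNetwork (V : Type) where
  cap : V → V → ℝ≥0∞
  s : V
  t : V

variable {V : Type} [Fintype V] [DecidableEq V]

/-- `f` is a flow: nonnegative, below capacity, conservation away from `s`, `t`. -/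
def IsFlow (N : FlowNetwork V) (f : V → V → ℝ) : Prop :=
  (∀ u v, 0 ≤ f u v) ∧
  (∀ u v, ENNReal.ofReal (f u v) ≤ N.cap u v) ∧
  (∀ w, w ≠ N.s → w ≠ N.t → ∑ u, f u w = ∑ u, f w u)

/-- The total (net) flow into the sink. -/
def netFlow (N : FlowNetwork V) (f : V → V → ℝ) : ℝ :=
  ∑ u, f u N.t - ∑ u, f N.t u

/-- A max-flow: a flow of maximal total flow. -/
def IsMaxFlow (N : FlowNetwork V) (f : V → V → ℝ) : Prop :=
  IsFlow N f ∧ ∀ g, IsFlow N g → netFlow N g ≤ netFlow N f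

/-- One step of an augmenting path for `f`: either a forward edge with
residual capacity, or a backward edge carrying positive flow. -/
def AugStep (N : FlowNetwork V) (f : V → V → ℝ) (u v : V) : Prop :=
  ENNReal.ofReal (f u v) < N.cap u v ∨ 0 < f v u

/-- A cut: a set of vertices containing the source but not the sink. -/
def IsCut (N : FlowNetwork V) (S : Finset V) : Prop :=
  N.s ∈ S ∧ N.t ∉ S

/-- The capacity of a cut: sum of capacities of edges leaving it. -/
noncomputable def cutCap (N : FlowNetwork V) (S : Finset V) : ℝ≥0∞ :=
  ∑ u ∈ S, ∑ v ∈ Sᶜ, N.cap u v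

/-- A min-cut: a cut of minimum capacity. -/
def IsMinCut (N : FlowNetwork V) (S : Finset V) : Prop :=
  IsCut N S ∧ ∀ T, IsCut N T → cutCap N S ≤ cutCap N T

open scoped Classical in
/-- The set `S_c` of the source together with all vertices reachable from
the source by paths augmenting for `f`. -/
noncomputable def reachCut (N : FlowNetwork V) (f : V → V → ℝ) : Finset V :=
  Finset.univ.filter (fun W => Relation.ReflTransGen (AugStep N f) N.s W)


section MinCutAux
set_option linter.unusedSectionVars false

/-- net inflow at a vertex -/
def exss (f : V → V → ℝ) (w : V) : ℝ := ∑ u, f u w - ∑ u, f w u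

lemma sum_exss (f : V → V → ℝ) : ∑ w, exss f w = 0 := by
  simp only [exss, Finset.sum_sub_distrib]
  rw [Finset.sum_comm]
  ring

lemma exss_update (f : V → V → ℝ) (b c : V) (a : ℝ) (w : V) :
    exss (fun u v => if u = b ∧ v = c then f u v + a else f u v) w
      = exss f w + (if w = c then a else 0) - (if w = b then a else 0) := by
  unfold exss
  have h1 : ∑ u, (if u = b ∧ w = c then f u w + a else f u w)
      = (∑ u, f u w) + (if w = c then a else 0) := by
    by_cases hw : w = c
    · simp only [hw, and_true, if_true]
      rw [show (∑ u, if u = b then f u c + a else f u c)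
          = ∑ u, (f u c + if u = b then a else 0) by
            apply Finset.sum_congr rfl; intro u _; by_cases h : u = b <;> simp [h]]
      rw [Finset.sum_add_distrib]
      simp
    · simp [hw]
  have h2 : ∑ u, (if w = b ∧ u = c then f w u + a else f w u)
      = (∑ u, f w u) + (if w = b then a else 0) := by
    by_cases hw : w = b
    · simp only [hw, true_and, if_true]
      rw [show (∑ u, if u = c then f b u + a else f b u)
          = ∑ u, (f b u + if u = c then a else 0) by
            apply Finset.sum_congr rfl; intro u _; by_cases h : u = c <;> simp [h]]
      rw [Finset.sum_add_distrib]
      simp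
    · simp [hw]
  simp only [h1, h2]
  ring

/-- The (real) residual capacity of a residual-graph step. -/
noncomputable def resid (N : FlowNetwork V) (f : V → V → ℝ) (b c : V) : ℝ :=
  if ENNReal.ofReal (f b c) < N.cap b c then
    (if N.cap b c = ⊤ then 1 else (N.cap b c).toReal - f b c)
  else f c b

lemma resid_pos {N : FlowNetwork V} {f : V → V → ℝ} {b c : V}
    (hf0 : 0 ≤ f b c) (h : AugStep N f b c) : 0 < resid N f b c := by
  unfold resid
  by_cases hfw : ENNReal.ofReal (f b c) < N.cap b c
  · simp only [hfw, if_true]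
    by_cases htop : N.cap b c = ⊤
    · simp [htop]
    · simp only [htop, if_false]
      have h2 := (ENNReal.toReal_lt_toReal ENNReal.ofReal_ne_top htop).mpr hfw
      rw [ENNReal.toReal_ofReal hf0] at h2
      linarith
  · simp only [hfw, if_false]
    rcases h with h | h
    · exact absurd h hfw
    · exact h

/-- Push `δ` along a residual step `b → c`, starting from a flow `g` that is
edgewise within `ε₁` of `f`. -/
lemma push (N : FlowNetwork V) (f g : V → V → ℝ) (b c : V) (hbc : b ≠ c)
    (hf0 : ∀ u v, 0 ≤ f u v)
    (hg0 : ∀ u v, 0 ≤ g u v) (hgcap : ∀ u v, ENNReal.ofReal (g u v) ≤ N.cap u v)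
    (step : AugStep N f b c) {ε₁ δ : ℝ} (hδ : 0 < δ) (hδε : δ ≤ ε₁)
    (hε₁ : 2 * ε₁ ≤ resid N f b c)
    (hnear : ∀ u v, |g u v - f u v| ≤ ε₁) :
    ∃ g' : V → V → ℝ, (∀ u v, 0 ≤ g' u v) ∧
      (∀ u v, ENNReal.ofReal (g' u v) ≤ N.cap u v) ∧
      (∀ u v, |g' u v - f u v| ≤ ε₁ + δ) ∧
      (∀ w, w ≠ b → w ≠ c → exss g' w = exss g w) ∧
      exss g' b = exss g b - δ ∧ exss g' c = exss g c + δ := by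
  by_cases hfw : ENNReal.ofReal (f b c) < N.cap b c
  · -- forward edge
    refine ⟨fun u v => if u = b ∧ v = c then g u v + δ else g u v, ?_, ?_, ?_, ?_, ?_, ?_⟩
    · intro u v; dsimp only; split_ifs with h
      · have := hg0 u v; linarith
      · exact hg0 u v
    · intro u v; dsimp only; split_ifs with h
      · obtain ⟨rfl, rfl⟩ := h
        by_cases htop : N.cap u v = ⊤
        · simp [htop]
        · have hr : resid N f u v = (N.cap u v).toReal - f u v := by
            unfold resid; simp [hfw, htop]
          rw [hr] at hε₁
          have h1 := abs_le.mp (hnear u v)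
          have h2 : g u v + δ ≤ (N.cap u v).toReal := by linarith
          calc ENNReal.ofReal (g u v + δ) ≤ ENNReal.ofReal (N.cap u v).toReal :=
                ENNReal.ofReal_le_ofReal h2
            _ = N.cap u v := ENNReal.ofReal_toReal htop
      · exact hgcap u v
    · intro u v; dsimp only; split_ifs with h
      · obtain ⟨rfl, rfl⟩ := h
        have := abs_le.mp (hnear u v)
        rw [abs_le]; constructor <;> linarith
      · exact (hnear u v).trans (by linarith)
    · intro w hwb hwc
      rw [exss_update]
      simp [hwb, hwc]
    · rw [exss_update]; simp [hbc]; try ring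
    · rw [exss_update]; simp [Ne.symm hbc]; try ring
  · -- backward edge
    have hbk : 0 < f c b := by rcases step with h | h; exact absurd h hfw; exact h
    have hr : resid N f b c = f c b := by unfold resid; simp [hfw]
    rw [hr] at hε₁
    refine ⟨fun u v => if u = c ∧ v = b then g u v + (-δ) else g u v, ?_, ?_, ?_, ?_, ?_, ?_⟩
    · intro u v; dsimp only; split_ifs with h
      · obtain ⟨rfl, rfl⟩ := h
        have := abs_le.mp (hnear u v)
        linarith
      · exact hg0 u v
    · intro u v; dsimp only; split_ifs with h
      · obtain ⟨rfl, rfl⟩ := h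
        exact le_trans (ENNReal.ofReal_le_ofReal (by linarith)) (hgcap u v)
      · exact hgcap u v
    · intro u v; dsimp only; split_ifs with h
      · obtain ⟨rfl, rfl⟩ := h
        have := abs_le.mp (hnear u v)
        rw [abs_le]; constructor <;> linarith
      · exact (hnear u v).trans (by linarith)
    · intro w hwb hwc
      rw [exss_update]
      simp [hwb, hwc]
    · rw [exss_update]; simp [hbc]; try ring
    · rw [exss_update]; simp [Ne.symm hbc]; try ring

/-- The net flow across any cut equals the value of the flow. -/
lemma cross_cut (N : FlowNetwork V) (f : V → V → ℝ)
    (hcons : ∀ w, w ≠ N.s → w ≠ N.t → ∑ u, f u w = ∑ u, f w u)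
    (hst : N.s ≠ N.t) (T : Finset V) (hs : N.s ∈ T) (ht : N.t ∉ T) :
    (∑ u ∈ T, ∑ v ∈ Tᶜ, f u v) - (∑ u ∈ T, ∑ v ∈ Tᶜ, f v u) = netFlow N f := by
  have hzero : ∀ w, w ≠ N.s → w ≠ N.t → exss f w = 0 := by
    intro w h1 h2; unfold exss; rw [hcons w h1 h2]; ring
  have hT : ∑ w ∈ T, exss f w = exss f N.s := by
    apply Finset.sum_eq_single_of_mem _ hs
    intro w _ hw
    exact hzero w hw (fun h => ht (h ▸ ‹w ∈ T›))
  have hTc : ∑ w ∈ Tᶜ, exss f w = exss f N.t := by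
    apply Finset.sum_eq_single_of_mem _ (Finset.mem_compl.mpr ht)
    intro w hwmem hw
    exact hzero w (fun h => (Finset.mem_compl.mp hwmem) (h ▸ hs)) hw
  have htot : ∑ w ∈ T, exss f w + ∑ w ∈ Tᶜ, exss f w = 0 := by
    rw [Finset.sum_add_sum_compl]
    exact sum_exss f
  have hs_eq : exss f N.s = -netFlow N f := by
    have : exss f N.t = netFlow N f := rfl
    rw [hT, hTc, this] at htot; linarith
  -- now split the sums
  have hsplit : ∑ w ∈ T, exss f w
      = ((∑ w ∈ T, ∑ u ∈ Tᶜ, f u w) - (∑ w ∈ T, ∑ u ∈ Tᶜ, f w u)) := by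
    unfold exss
    rw [Finset.sum_sub_distrib]
    have e1 : ∑ w ∈ T, ∑ u, f u w
        = (∑ w ∈ T, ∑ u ∈ T, f u w) + (∑ w ∈ T, ∑ u ∈ Tᶜ, f u w) := by
      rw [← Finset.sum_add_distrib]
      apply Finset.sum_congr rfl
      intro w _
      rw [Finset.sum_add_sum_compl]
    have e2 : ∑ w ∈ T, ∑ u, f w u
        = (∑ w ∈ T, ∑ u ∈ T, f w u) + (∑ w ∈ T, ∑ u ∈ Tᶜ, f w u) := by
      rw [← Finset.sum_add_distrib]
      apply Finset.sum_congr rfl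
      intro w _
      rw [Finset.sum_add_sum_compl]
    rw [e1, e2, Finset.sum_comm (s := T) (t := T) (f := fun u w => f u w)]
    ring
  have := hT ▸ hsplit
  rw [hs_eq] at this
  have hx : (∑ u ∈ T, ∑ v ∈ Tᶜ, f v u) - (∑ u ∈ T, ∑ v ∈ Tᶜ, f u v) = -netFlow N f := this.symm
  linarith

end MinCutAux

/-- for a max-flow `f`, the set `S_c` of the source together with all
vertices reachable from the source by `f`-augmenting paths is a min-cut
(assuming some cut of finite capacity exists). -/
theorem reachCut_isMinCut (N : FlowNetwork V) (f : V → V → ℝ)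
    (hf : IsMaxFlow N f) (hfin : ∃ S, IsCut N S ∧ cutCap N S ≠ ⊤) :
    IsMinCut N (reachCut N f) := by
  classical
  obtain ⟨hflow, hmax⟩ := hf
  obtain ⟨hf0, hfcap, hcons⟩ := hflow
  obtain ⟨T₀, ⟨hsT₀, htT₀⟩, _⟩ := hfin
  have hst : N.s ≠ N.t := fun h => htT₀ (h ▸ hsT₀)
  set S := reachCut N f with hS
  have hmem : ∀ w, w ∈ S ↔ Relation.ReflTransGen (AugStep N f) N.s w := by
    intro w; simp [hS, reachCut]
  have hsS : N.s ∈ S := (hmem _).mpr Relation.ReflTransGen.refl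
  -- key augmentation claim
  have key : ∀ W, Relation.ReflTransGen (AugStep N f) N.s W → W = N.s ∨
      ∀ ε : ℝ, 0 < ε → ∃ (g : V → V → ℝ) (δ : ℝ), 0 < δ ∧ δ ≤ ε ∧
        (∀ u v, 0 ≤ g u v) ∧ (∀ u v, ENNReal.ofReal (g u v) ≤ N.cap u v) ∧
        (∀ u v, |g u v - f u v| ≤ ε) ∧
        (∀ w, w ≠ N.s → w ≠ W → exss g w = exss f w) ∧
        exss g W = exss f W + δ := by
    intro W h
    induction h with
    | refl => exact Or.inl rfl
    | @tail b c hb step ih =>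
      by_cases hcs : c = N.s
      · exact Or.inl hcs
      right
      by_cases hbceq : b = c
      · subst hbceq
        rcases ih with rfl | ih
        · exact absurd rfl hcs
        · exact ih
      intro ε hε
      have hrpos : 0 < resid N f b c := resid_pos (hf0 b c) step
      set ε₁ := min (ε / 2) (resid N f b c / 2) with hε₁def
      have hε₁pos : 0 < ε₁ := lt_min (by linarith) (by linarith)
      have hε₁le : ε₁ ≤ ε / 2 := min_le_left _ _
      have h2ε₁ : 2 * ε₁ ≤ resid N f b c := by
        have := min_le_right (ε / 2) (resid N f b c / 2); linarith
      rcases ih with rfl | ih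
      · -- single step from the source
        obtain ⟨g', hg'0, hg'cap, hg'near, hg'ex, hg'b, hg'c⟩ :=
          push N f f N.s c hbceq hf0 hf0 hfcap step hε₁pos (le_refl ε₁) h2ε₁
            (fun u v => by simp [le_of_lt hε₁pos])
        refine ⟨g', ε₁, hε₁pos, by linarith, hg'0, hg'cap, ?_, ?_, ?_⟩
        · intro u v; exact (hg'near u v).trans (by linarith)
        · intro w hws hwc; exact hg'ex w hws hwc
        · exact hg'c
      · -- extend an existing augmentation
        obtain ⟨g, δ, hδ, hδε₁, hg0, hgcap, hgnear, hgex, hgb⟩ := ih ε₁ hε₁pos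
        obtain ⟨g', hg'0, hg'cap, hg'near, hg'ex, hg'b, hg'c⟩ :=
          push N f g b c hbceq hf0 hg0 hgcap step hδ hδε₁ h2ε₁ hgnear
        refine ⟨g', δ, hδ, by linarith, hg'0, hg'cap, ?_, ?_, ?_⟩
        · intro u v; exact (hg'near u v).trans (by linarith)
        · intro w hws hwc
          by_cases hwb : w = b
          · subst hwb
            rw [hg'b, hgb]; ring
          · rw [hg'ex w hwb hwc, hgex w hws hwb]
        · rw [hg'c, hgex c hcs (Ne.symm hbceq)]
  -- the sink is not reachable
  have htS : N.t ∉ S := by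
    intro hmem_t
    rcases key _ ((hmem _).mp hmem_t) with h | P
    · exact hst h.symm
    obtain ⟨g, δ, hδ, _, hg0, hgcap, _, hgex, hgt⟩ := P 1 one_pos
    have hgflow : IsFlow N g := by
      refine ⟨hg0, hgcap, ?_⟩
      intro w hw1 hw2
      have h1 := hgex w hw1 hw2
      have h0 : exss f w = 0 := by unfold exss; rw [hcons w hw1 hw2]; ring
      rw [h0] at h1
      unfold exss at h1; linarith
    have hval : netFlow N g = netFlow N f + δ := by
      have h1 : exss g N.t = exss f N.t + δ := hgt
      unfold exss at h1
      unfold netFlow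
      linarith
    have := hmax g hgflow
    rw [hval] at this
    linarith
  refine ⟨⟨hsS, htS⟩, ?_⟩
  -- minimality
  have hSsat : ∀ u ∈ S, ∀ v ∈ Sᶜ, ¬ AugStep N f u v := by
    intro u hu v hv hstep
    exact (Finset.mem_compl.mp hv) ((hmem v).mpr (((hmem u).mp hu).tail hstep))
  have hcapS : ∀ u ∈ S, ∀ v ∈ Sᶜ, ENNReal.ofReal (f u v) = N.cap u v := by
    intro u hu v hv
    have h := hSsat u hu v hv
    rw [AugStep, not_or] at h
    exact le_antisymm (hfcap u v) (not_lt.mp h.1)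
  have hzeroS : ∀ u ∈ S, ∀ v ∈ Sᶜ, f v u = 0 := by
    intro u hu v hv
    have h := hSsat u hu v hv
    rw [AugStep, not_or] at h
    exact le_antisymm (not_lt.mp h.2) (hf0 v u)
  have hcrossS := cross_cut N f hcons hst S hsS htS
  have hcutS : cutCap N S = ENNReal.ofReal (netFlow N f) := by
    have hin0 : ∑ u ∈ S, ∑ v ∈ Sᶜ, f v u = 0 := by
      apply Finset.sum_eq_zero; intro u hu
      apply Finset.sum_eq_zero; intro v hv
      exact hzeroS u hu v hv
    rw [← hcrossS, hin0, sub_zero]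
    unfold cutCap
    rw [ENNReal.ofReal_sum_of_nonneg (fun u _ => Finset.sum_nonneg fun v _ => hf0 u v)]
    apply Finset.sum_congr rfl
    intro u hu
    rw [ENNReal.ofReal_sum_of_nonneg (fun v _ => hf0 u v)]
    exact Finset.sum_congr rfl fun v hv => (hcapS u hu v hv).symm
  intro T hT
  have hcrossT := cross_cut N f hcons hst T hT.1 hT.2
  rw [hcutS]
  have hbjpos : 0 ≤ ∑ u ∈ T, ∑ v ∈ Tᶜ, f v u :=
    Finset.sum_nonneg fun u _ => Finset.sum_nonneg fun v _ => hf0 v u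
  calc ENNReal.ofReal (netFlow N f)
      ≤ ENNReal.ofReal (∑ u ∈ T, ∑ v ∈ Tᶜ, f u v) :=
        ENNReal.ofReal_le_ofReal (by linarith)
    _ = ∑ u ∈ T, ∑ v ∈ Tᶜ, ENNReal.ofReal (f u v) := by
        rw [ENNReal.ofReal_sum_of_nonneg (fun u _ => Finset.sum_nonneg fun v _ => hf0 u v)]
        exact Finset.sum_congr rfl fun u _ =>
          ENNReal.ofReal_sum_of_nonneg (fun v _ => hf0 u v)
    _ ≤ cutCap N T :=
        Finset.sum_le_sum fun u _ => Finset.sum_le_sum fun v _ => hfcap u v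
end

section
/- Let f* be a maximum flow in a flow network, and let S_c be the set of the source s together with all vertices reachable from s by a path augmenting for f*. Then for every min-cut S, S_c ⊆ S. Consequently S_c is the unique smallest min-cut with respect to set inclusion. -/
open Finset
open scoped ENNReal

variable {V : Type} [Fintype V] [DecidableEq V]

namespace FlowAux

open List

variable {α : Type*}

lemma not_nodup_decomp : ∀ (l : List α), ¬ l.Nodup →
    ∃ (x : α) (l₁ l₂ l₃ : List α), l = l₁ ++ x :: l₂ ++ x :: l₃ := by
  intro l
  induction l with
  | nil => intro h; exact absurd List.nodup_nil h
  | cons a tl ih =>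
    intro hl
    by_cases ha : a ∈ tl
    · obtain ⟨s, t, rfl⟩ := List.append_of_mem ha
      exact ⟨a, [], s, t, rfl⟩
    · have htl : ¬ tl.Nodup := fun h => hl (List.nodup_cons.mpr ⟨ha, h⟩)
      obtain ⟨x, l₁, l₂, l₃, rfl⟩ := ih htl
      exact ⟨x, a :: l₁, l₂, l₃, rfl⟩

lemma getLast?_cons_append_cons (c : α) (m : List α) (x : α) (k : List α) :
    (c :: (m ++ x :: k)).getLast? = (x :: k).getLast? := by
  rw [show c :: (m ++ x :: k) = (c :: m) ++ (x :: k) by simp, List.getLast?_append,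
    List.getLast?_eq_getLast (List.cons_ne_nil x k)]
  rfl

lemma chain_shorten {r : α → α → Prop} {a b : α} :
    ∀ (n : ℕ) (l : List α), l.length ≤ n → List.Chain r a l →
    (a :: l).getLast? = some b →
    ∃ l', List.Chain r a l' ∧ (a :: l').getLast? = some b ∧ (a :: l').Nodup := by
  intro n
  induction n with
  | zero =>
    intro l hl hc hlast
    have : l = [] := List.length_eq_zero_iff.mp (Nat.le_zero.mp hl)
    subst this
    exact ⟨[], List.Chain.nil, hlast, List.nodup_singleton a⟩
  | succ n ih =>
    intro l hl hc hlast
    by_cases hnd : (a :: l).Nodup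
    · exact ⟨l, hc, hlast, hnd⟩
    · obtain ⟨x, l₁, l₂, l₃, he⟩ := not_nodup_decomp _ hnd
      cases l₁ with
      | nil =>
        simp only [List.nil_append, List.cons.injEq] at he
        obtain ⟨rfl, rfl⟩ := he
        have hc' : List.IsChain r (a :: (l₂ ++ a :: l₃)) := hc
        rw [List.isChain_cons_split] at hc'
        have hlen : l₃.length ≤ n := by
          have h3 : (l₂ ++ a :: l₃).length ≤ n + 1 := hl
          simp [List.length_append] at h3; omega
        have hlast' : (a :: l₃).getLast? = some b := by
          have h4 : (a :: (l₂ ++ a :: l₃)).getLast? = some b := hlast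
          rwa [getLast?_cons_append_cons] at h4
        exact ih l₃ hlen hc'.2 hlast'
      | cons c l₁' =>
        simp only [List.cons_append, List.cons.injEq] at he
        obtain ⟨rfl, rfl⟩ := he
        have hc0 : List.IsChain r (a :: (l₁' ++ x :: l₂ ++ x :: l₃)) := hc
        have hc1 : List.IsChain r (a :: (l₁' ++ x :: (l₂ ++ x :: l₃))) := by
          simpa only [List.append_assoc, List.cons_append] using hc0
        rw [List.isChain_cons_split] at hc1
        have hc2 := hc1.2
        rw [List.isChain_cons_split] at hc2
        have hcnew : List.IsChain r (a :: (l₁' ++ x :: l₃)) :=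
          List.isChain_cons_split.mpr ⟨hc1.1, hc2.2⟩
        have hlen : (l₁' ++ x :: l₃).length ≤ n := by
          have h3 : (l₁' ++ x :: l₂ ++ x :: l₃).length ≤ n + 1 := hl
          simp [List.length_append] at h3 ⊢; omega
        have hlast' : (a :: (l₁' ++ x :: l₃)).getLast? = some b := by
          have h4 : (a :: (l₁' ++ x :: (l₂ ++ x :: l₃))).getLast? = some b := by
            rw [show a :: (l₁' ++ x :: (l₂ ++ x :: l₃)) = a :: (l₁' ++ x :: l₂ ++ x :: l₃) by simp]
            exact hlast
          rw [getLast?_cons_append_cons] at h4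
          rw [show x :: (l₂ ++ x :: l₃) = x :: (l₂ ++ x :: l₃) from rfl] at h4
          rw [getLast?_cons_append_cons] at h4
          rw [getLast?_cons_append_cons]
          exact h4
        exact ih _ hlen hcnew hlast'

/-- From reflexive-transitive closure, extract a duplicate-free chain. -/
lemma exists_nodup_chain {r : α → α → Prop} {a b : α} (h : Relation.ReflTransGen r a b) :
    ∃ l, List.Chain r a l ∧ (a :: l).getLast? = some b ∧ (a :: l).Nodup := by
  obtain ⟨l, hc, hlast⟩ := List.exists_isChain_cons_of_relationReflTransGen h
  have hlast' : (a :: l).getLast? = some b := by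
    rw [List.getLast?_eq_getLast (List.cons_ne_nil _ _), hlast]
  exact chain_shorten l.length l le_rfl hc hlast'



open List

variable {α : Type*}

lemma rel_of_mem_zip {r : α → α → Prop} :
    ∀ {a : α} {l : List α}, List.Chain r a l → ∀ u v : α, (u, v) ∈ (a :: l).zip l → r u v := by
  intro a l
  induction l generalizing a with
  | nil => intro _ u v h; simp [List.zip] at h
  | cons b tl ih =>
    intro hc u v h
    have hc : List.IsChain r (a :: b :: tl) := hc
    rw [List.isChain_cons_cons] at hc
    rcases List.mem_cons.mp h with h1 | h1
    · have hu : u = a := congrArg Prod.fst h1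
      have hv : v = b := congrArg Prod.snd h1
      rw [hu, hv]; exact hc.1
    · exact ih hc.2 u v h1

lemma mem_zip_head_or_tail {a b : α} {tl : List α} {x y : α}
    (hx : (x, y) ∈ (a :: b :: tl).zip (b :: tl)) :
    (x = a ∧ y = b) ∨ (x, y) ∈ (b :: tl).zip tl := by
  rcases List.mem_cons.mp hx with h1 | h1
  · exact Or.inl ⟨congrArg Prod.fst h1, congrArg Prod.snd h1⟩
  · exact Or.inr h1

lemma snd_unique : ∀ {p : List α}, p.Nodup → ∀ u u' w : α,
    (u, w) ∈ p.zip p.tail → (u', w) ∈ p.zip p.tail → u = u' := by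
  intro p
  induction p with
  | nil => intro _ u u' w h; simp at h
  | cons a l ih =>
    intro hnd u u' w h h'
    cases l with
    | nil => simp at h
    | cons b tl =>
      have hnd' : (b :: tl).Nodup := hnd.of_cons
      have hbtl : b ∉ tl := (List.nodup_cons.mp hnd').1
      rcases mem_zip_head_or_tail h with ⟨hu, hw⟩ | h1
      · rcases mem_zip_head_or_tail h' with ⟨hu', _⟩ | h2
        · rw [hu, hu']
        · exact absurd (hw ▸ (List.of_mem_zip h2).2) hbtl
      · rcases mem_zip_head_or_tail h' with ⟨_, hw'⟩ | h2
        · exact absurd (hw' ▸ (List.of_mem_zip h1).2) hbtl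
        · exact ih hnd' u u' w h1 h2

lemma fst_unique : ∀ {p : List α}, p.Nodup → ∀ u u' w : α,
    (w, u) ∈ p.zip p.tail → (w, u') ∈ p.zip p.tail → u = u' := by
  intro p
  induction p with
  | nil => intro _ u u' w h; simp at h
  | cons a l ih =>
    intro hnd u u' w h h'
    cases l with
    | nil => simp at h
    | cons b tl =>
      have hnd' : (b :: tl).Nodup := hnd.of_cons
      have hna : a ∉ b :: tl := (List.nodup_cons.mp hnd).1
      rcases mem_zip_head_or_tail h with ⟨hw, hu⟩ | h1
      · rcases mem_zip_head_or_tail h' with ⟨hw', hu'⟩ | h2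
        · rw [hu, hu']
        · exact absurd (hw ▸ (List.of_mem_zip h2).1) hna
      · rcases mem_zip_head_or_tail h' with ⟨hw', hu'⟩ | h2
        · exact absurd (hw' ▸ (List.of_mem_zip h1).1) hna
        · exact ih hnd' u u' w h1 h2

lemma no_swap : ∀ {p : List α}, p.Nodup → ∀ u v : α,
    (u, v) ∈ p.zip p.tail → (v, u) ∈ p.zip p.tail → False := by
  intro p
  induction p with
  | nil => intro _ u v h; simp at h
  | cons a l ih =>
    intro hnd u v h h'
    cases l with
    | nil => simp at h
    | cons b tl =>
      have hnd' : (b :: tl).Nodup := hnd.of_cons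
      have hbtl : b ∉ tl := (List.nodup_cons.mp hnd').1
      have hna : a ∉ b :: tl := (List.nodup_cons.mp hnd).1
      rcases mem_zip_head_or_tail h with ⟨hu, hv⟩ | h1
      · rcases mem_zip_head_or_tail h' with ⟨hv', hu'⟩ | h2
        · have hab : a = b := hu.symm.trans hu'
          exact hna (by rw [hab]; exact List.mem_cons_self)
        · exact hna (List.mem_cons_of_mem _ (hu ▸ (List.of_mem_zip h2).2))
      · rcases mem_zip_head_or_tail h' with ⟨hv', hu'⟩ | h2
        · exact hna (List.mem_cons_of_mem _ (hv' ▸ (List.of_mem_zip h1).2))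
        · exact ih hnd' u v h1 h2

lemma no_self_pair {p : List α} (hnd : p.Nodup) (u : α) : (u, u) ∈ p.zip p.tail → False :=
  fun h => no_swap hnd u u h h

lemma exists_in_pair : ∀ {p : List α} {w : α}, w ∈ p.tail → ∃ u, (u, w) ∈ p.zip p.tail := by
  intro p
  induction p with
  | nil => intro w h; simp at h
  | cons a l ih =>
    intro w hw
    cases l with
    | nil => simp at hw
    | cons b tl =>
      rcases List.mem_cons.mp hw with rfl | hw'
      · exact ⟨a, List.mem_cons_self⟩
      · obtain ⟨u, hu⟩ := ih hw'
        exact ⟨u, List.mem_cons_of_mem _ hu⟩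

lemma exists_out_pair : ∀ {p : List α} {w : α} (hp : p ≠ []), w ∈ p →
    w ≠ p.getLast hp → ∃ u, (w, u) ∈ p.zip p.tail := by
  intro p
  induction p with
  | nil => intro w h; simp at h
  | cons a l ih =>
    intro w _ hw hne
    cases l with
    | nil =>
      rcases List.mem_singleton.mp hw with rfl
      exact absurd rfl hne
    | cons b tl =>
      rcases List.mem_cons.mp hw with rfl | hw'
      · exact ⟨b, List.mem_cons_self⟩
      · have hne' : w ≠ (b :: tl).getLast (List.cons_ne_nil _ _) := by
          rwa [List.getLast_cons (List.cons_ne_nil _ _)] at hne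
        obtain ⟨u, hu⟩ := ih (List.cons_ne_nil _ _) hw' hne'
        exact ⟨u, List.mem_cons_of_mem _ hu⟩

lemma getLast_no_out : ∀ {p : List α} (hp : p ≠ []), p.Nodup →
    ∀ u, (p.getLast hp, u) ∈ p.zip p.tail → False := by
  intro p
  induction p with
  | nil => intro h; simp at h
  | cons a l ih =>
    intro _ hnd u hu
    cases l with
    | nil => simp at hu
    | cons b tl =>
      have hnd' : (b :: tl).Nodup := hnd.of_cons
      have hna : a ∉ b :: tl := (List.nodup_cons.mp hnd).1
      rw [List.getLast_cons (List.cons_ne_nil _ _)] at hu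
      rcases mem_zip_head_or_tail hu with ⟨hg, _⟩ | h2
      · exact hna (hg ▸ List.getLast_mem (List.cons_ne_nil _ _))
      · exact ih (List.cons_ne_nil _ _) hnd' u h2

lemma head_no_in {a : α} {l : List α} (hnd : (a :: l).Nodup) (u : α) :
    (u, a) ∈ (a :: l).zip l → False := by
  intro h
  exact (List.nodup_cons.mp hnd).1 (List.of_mem_zip h).2

end FlowAux

namespace FlowAux

lemma sum_ite_unique {V : Type} [Fintype V] (P : V → Prop) [DecidablePred P] (ε : ℝ)
    (hu : ∀ x y, P x → P y → x = y) :
    ∑ u, (if P u then ε else 0) = if ∃ u, P u then ε else 0 := by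
  by_cases h : ∃ u, P u
  · obtain ⟨u₀, hu₀⟩ := h
    rw [if_pos ⟨u₀, hu₀⟩]
    rw [Finset.sum_eq_single u₀ (fun b _ hb => if_neg (fun hPb => hb (hu b u₀ hPb hu₀)))
      (fun hb => absurd (Finset.mem_univ u₀) hb)]
    exact if_pos hu₀
  · rw [if_neg h]
    exact Finset.sum_eq_zero (fun u _ => if_neg (fun hP => h ⟨u, hP⟩))

lemma foldr_min_le {l : List ℝ} {x : ℝ} (hx : x ∈ l) : l.foldr min 1 ≤ x := by
  induction l with
  | nil => simp at hx
  | cons a tl ih =>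
    rcases List.mem_cons.mp hx with rfl | hx'
    · exact min_le_left _ _
    · exact le_trans (min_le_right _ _) (ih hx')

lemma foldr_min_pos {l : List ℝ} (h : ∀ x ∈ l, 0 < x) : 0 < l.foldr min 1 := by
  induction l with
  | nil => norm_num
  | cons a tl ih =>
    exact lt_min (h a (List.mem_cons_self)) (ih (fun x hx => h x (List.mem_cons_of_mem _ hx)))

end FlowAux

section AugmentLemma

variable {V : Type} [Fintype V] [DecidableEq V]

/-- A max flow admits no augmenting path from source to sink. -/
lemma no_aug_path (N : FlowNetwork V) (f : V → V → ℝ)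
    (hf : IsMaxFlow N f) (hst : N.s ≠ N.t) :
    ¬ Relation.ReflTransGen (AugStep N f) N.s N.t := by
  classical
  intro hreach
  obtain ⟨l, hchain, hlastq, hnodup⟩ := FlowAux.exists_nodup_chain hreach
  have hPne : (N.s :: l : List V) ≠ [] := List.cons_ne_nil _ _
  have hlast : (N.s :: l).getLast hPne = N.t := by
    have h := List.getLast?_eq_getLast hPne
    rw [hlastq] at h
    exact (Option.some_injective _ h).symm
  set pr : List (V × V) := (N.s :: l).zip l with hpr
  have haug : ∀ u v : V, (u, v) ∈ pr → AugStep N f u v := fun u v h =>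
    FlowAux.rel_of_mem_zip hchain u v h
  set term : V × V → ℝ := fun q =>
    if ENNReal.ofReal (f q.1 q.2) < N.cap q.1 q.2 then
      (if N.cap q.1 q.2 = ⊤ then 1 else (N.cap q.1 q.2).toReal - f q.1 q.2)
    else f q.2 q.1 with hterm
  have hterm_pos : ∀ q ∈ pr, 0 < term q := by
    intro q hq
    have haug' := haug q.1 q.2 (by simpa using hq)
    by_cases hfwd : ENNReal.ofReal (f q.1 q.2) < N.cap q.1 q.2
    · by_cases hcap : N.cap q.1 q.2 = ⊤
      · simp [hterm, hfwd, hcap]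
      · have hlt : f q.1 q.2 < (N.cap q.1 q.2).toReal :=
          (ENNReal.ofReal_lt_iff_lt_toReal (hf.1.1 _ _) hcap).mp hfwd
        simp only [hterm, if_pos hfwd, if_neg hcap]
        linarith
    · have hpos : 0 < f q.2 q.1 := by
        rcases haug' with h | h
        · exact absurd h hfwd
        · exact h
      simpa [hterm, if_neg hfwd] using hpos
  set ε : ℝ := (pr.map term).foldr min 1 with hε
  have hε_pos : 0 < ε := by
    apply FlowAux.foldr_min_pos
    intro x hx
    obtain ⟨q, hq, rfl⟩ := List.mem_map.mp hx
    exact hterm_pos q hq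
  have hε_le : ∀ q ∈ pr, ε ≤ term q := fun q hq =>
    FlowAux.foldr_min_le (List.mem_map_of_mem hq)
  set g : V → V → ℝ := fun u v =>
    f u v + (if (u, v) ∈ pr ∧ ENNReal.ofReal (f u v) < N.cap u v then ε else 0)
          - (if (v, u) ∈ pr ∧ ¬ ENNReal.ofReal (f v u) < N.cap v u then ε else 0) with hg
  have hnoswap : ∀ u v : V, (u, v) ∈ pr → (v, u) ∈ pr → False := fun u v h h' =>
    FlowAux.no_swap hnodup u v h h'
  have hsum : ∀ w : V, (∑ u, g u w) - (∑ u, g w u) = (∑ u, f u w) - (∑ u, f w u)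
      + ((if ∃ u, (u, w) ∈ pr then ε else 0) - (if ∃ u, (w, u) ∈ pr then ε else 0)) := by
    intro w
    have e1 : ∑ u, g u w = (∑ u, f u w)
        + ((∑ u, if (u, w) ∈ pr ∧ ENNReal.ofReal (f u w) < N.cap u w then ε else 0)
        - (∑ u, if (w, u) ∈ pr ∧ ¬ ENNReal.ofReal (f w u) < N.cap w u then ε else 0)) := by
      simp only [hg]
      rw [Finset.sum_sub_distrib, Finset.sum_add_distrib]
      ring
    have e2 : ∑ u, g w u = (∑ u, f w u)
        + ((∑ u, if (w, u) ∈ pr ∧ ENNReal.ofReal (f w u) < N.cap w u then ε else 0)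
        - (∑ u, if (u, w) ∈ pr ∧ ¬ ENNReal.ofReal (f u w) < N.cap u w then ε else 0)) := by
      simp only [hg]
      rw [Finset.sum_sub_distrib, Finset.sum_add_distrib]
      ring
    have hAD : (∑ u, if (u, w) ∈ pr ∧ ENNReal.ofReal (f u w) < N.cap u w then ε else 0)
        + (∑ u, if (u, w) ∈ pr ∧ ¬ ENNReal.ofReal (f u w) < N.cap u w then ε else 0)
        = ∑ u, if (u, w) ∈ pr then ε else 0 := by
      rw [← Finset.sum_add_distrib]
      refine Finset.sum_congr rfl (fun u _ => ?_)
      by_cases h1 : (u, w) ∈ pr <;> by_cases h2 : ENNReal.ofReal (f u w) < N.cap u w <;>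
        simp [h1, h2]
    have hBC : (∑ u, if (w, u) ∈ pr ∧ ¬ ENNReal.ofReal (f w u) < N.cap w u then ε else 0)
        + (∑ u, if (w, u) ∈ pr ∧ ENNReal.ofReal (f w u) < N.cap w u then ε else 0)
        = ∑ u, if (w, u) ∈ pr then ε else 0 := by
      rw [← Finset.sum_add_distrib]
      refine Finset.sum_congr rfl (fun u _ => ?_)
      by_cases h1 : (w, u) ∈ pr <;> by_cases h2 : ENNReal.ofReal (f w u) < N.cap w u <;>
        simp [h1, h2]
    have hIin : (∑ u, if (u, w) ∈ pr then ε else 0) = if ∃ u, (u, w) ∈ pr then ε else 0 :=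
      FlowAux.sum_ite_unique _ _ (fun x y hx hy => FlowAux.snd_unique hnodup x y w hx hy)
    have hIout : (∑ u, if (w, u) ∈ pr then ε else 0) = if ∃ u, (w, u) ∈ pr then ε else 0 :=
      FlowAux.sum_ite_unique _ _ (fun x y hx hy => FlowAux.fst_unique hnodup x y w hx hy)
    rw [e1, e2, ← hIin, ← hIout, ← hAD, ← hBC]
    ring
  have hgflow : IsFlow N g := by
    refine ⟨?_, ?_, ?_⟩
    · intro u v
      by_cases hb : (v, u) ∈ pr ∧ ¬ ENNReal.ofReal (f v u) < N.cap v u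
      · have hadd : ¬ ((u, v) ∈ pr ∧ ENNReal.ofReal (f u v) < N.cap u v) :=
          fun hc => hnoswap u v hc.1 hb.1
        have htm : term (v, u) = f u v := if_neg hb.2
        have h1 : ε ≤ f u v := htm ▸ hε_le _ hb.1
        simp only [hg, if_neg hadd, if_pos hb]
        linarith
      · have h0 := hf.1.1 u v
        simp only [hg, if_neg hb]
        split_ifs with h <;> linarith
    · intro u v
      by_cases ha : (u, v) ∈ pr ∧ ENNReal.ofReal (f u v) < N.cap u v
      · have hsub : ¬ ((v, u) ∈ pr ∧ ¬ ENNReal.ofReal (f v u) < N.cap v u) :=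
          fun hc => hnoswap u v ha.1 hc.1
        have hgv : g u v = f u v + ε := by
          simp only [hg, if_pos ha, if_neg hsub]; ring
        by_cases hcap : N.cap u v = ⊤
        · rw [hcap]; exact le_top
        · have ht := hε_le _ ha.1
          have htm : term (u, v) = (N.cap u v).toReal - f u v := by
            simp only [hterm, if_pos ha.2, if_neg hcap]
          rw [htm] at ht
          have hle : g u v ≤ (N.cap u v).toReal := by rw [hgv]; linarith
          exact ENNReal.ofReal_le_of_le_toReal hle
      · have hgle : g u v ≤ f u v := by
          simp only [hg, if_neg ha]
          split_ifs with h <;> linarith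
        exact le_trans (ENNReal.ofReal_le_ofReal hgle) (hf.1.2.1 u v)
    · intro w hws hwt
      have hcons := hf.1.2.2 w hws hwt
      have hiff : (∃ u, (u, w) ∈ pr) ↔ (∃ u, (w, u) ∈ pr) := by
        constructor
        · rintro ⟨u, hu⟩
          have hwl : w ∈ l := (List.of_mem_zip hu).2
          refine FlowAux.exists_out_pair hPne (List.mem_cons_of_mem _ hwl) ?_
          rw [hlast]; exact hwt
        · rintro ⟨u, hu⟩
          have hwP : w ∈ N.s :: l := (List.of_mem_zip hu).1
          have hwl : w ∈ l := by
            rcases List.mem_cons.mp hwP with rfl | h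
            · exact absurd rfl hws
            · exact h
          exact FlowAux.exists_in_pair hwl
      have hs := hsum w
      rw [hcons] at hs
      have hites : (if ∃ u, (u, w) ∈ pr then ε else 0)
          = (if ∃ u, (w, u) ∈ pr then ε else 0) := by
        by_cases h : ∃ u, (u, w) ∈ pr
        · rw [if_pos h, if_pos (hiff.mp h)]
        · rw [if_neg h, if_neg (fun h' => h (hiff.mpr h'))]
      rw [hites] at hs
      linarith
  have hlne : l ≠ [] := by
    intro h
    subst h
    simp only [List.getLast_singleton] at hlast
    exact hst hlast
  have htl : N.t ∈ l := by
    have h := List.getLast_cons (a := N.s) hlne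
    rw [h] at hlast
    rw [← hlast]
    exact List.getLast_mem hlne
  have hIin : ∃ u, (u, N.t) ∈ pr := FlowAux.exists_in_pair htl
  have hIout : ¬ ∃ u, (N.t, u) ∈ pr := by
    rintro ⟨u, hu⟩
    refine FlowAux.getLast_no_out hPne hnodup u ?_
    rw [hlast]
    exact hu
  have hnet : netFlow N g = netFlow N f + ε := by
    have hs := hsum N.t
    rw [if_pos hIin, if_neg hIout] at hs
    unfold netFlow
    linarith
  have hle := hf.2 g hgflow
  rw [hnet] at hle
  linarith

end AugmentLemma

section CutLemmas

variable {V : Type} [Fintype V] [DecidableEq V]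

lemma netFlow_eq_cut (N : FlowNetwork V) (f : V → V → ℝ) (hf : IsFlow N f)
    (S : Finset V) (hS : IsCut N S) :
    netFlow N f = (∑ u ∈ S, ∑ v ∈ Sᶜ, f u v) - (∑ u ∈ Sᶜ, ∑ v ∈ S, f u v) := by
  classical
  have htot : ∑ w, ((∑ u, f w u) - (∑ u, f u w)) = 0 := by
    rw [Finset.sum_sub_distrib]
    rw [Finset.sum_comm (s := Finset.univ) (t := Finset.univ) (f := fun w u => f u w)]
    exact sub_self _
  have hSsum : ∑ w ∈ S, ((∑ u, f w u) - (∑ u, f u w)) = (∑ u, f N.s u) - (∑ u, f u N.s) := by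
    refine Finset.sum_eq_single_of_mem N.s hS.1 (fun w hw hne => ?_)
    have hwt : w ≠ N.t := fun h => hS.2 (h ▸ hw)
    rw [hf.2.2 w hne hwt]
    exact sub_self _
  have hCsum : ∑ w ∈ Sᶜ, ((∑ u, f w u) - (∑ u, f u w)) = (∑ u, f N.t u) - (∑ u, f u N.t) := by
    refine Finset.sum_eq_single_of_mem N.t (Finset.mem_compl.mpr hS.2) (fun w hw hne => ?_)
    have hws : w ≠ N.s := fun h => (Finset.mem_compl.mp hw) (h ▸ hS.1)
    rw [hf.2.2 w hws hne]
    exact sub_self _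
  have hsplit : ∑ w ∈ S, ((∑ u, f w u) - (∑ u, f u w))
      + ∑ w ∈ Sᶜ, ((∑ u, f w u) - (∑ u, f u w)) = 0 := by
    rw [Finset.sum_add_sum_compl]
    exact htot
  rw [hSsum, hCsum] at hsplit
  have hnet : netFlow N f = ∑ w ∈ S, ((∑ u, f w u) - (∑ u, f u w)) := by
    unfold netFlow
    rw [hSsum]
    linarith
  rw [hnet]
  have hsplit2 : ∑ w ∈ S, ((∑ u, f w u) - (∑ u, f u w))
      = (∑ w ∈ S, ∑ u ∈ S, f w u) + (∑ w ∈ S, ∑ u ∈ Sᶜ, f w u)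
        - ((∑ w ∈ S, ∑ u ∈ S, f u w) + (∑ w ∈ S, ∑ u ∈ Sᶜ, f u w)) := by
    rw [← Finset.sum_add_distrib, ← Finset.sum_add_distrib, ← Finset.sum_sub_distrib]
    refine Finset.sum_congr rfl (fun w _ => ?_)
    rw [Finset.sum_add_sum_compl, Finset.sum_add_sum_compl]
  rw [hsplit2]
  have hX : (∑ w ∈ S, ∑ u ∈ S, f w u) = (∑ u ∈ S, ∑ w ∈ S, f w u) := Finset.sum_comm
  have hI : (∑ w ∈ S, ∑ u ∈ Sᶜ, f u w) = (∑ u ∈ Sᶜ, ∑ w ∈ S, f u w) := Finset.sum_comm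
  rw [hX, hI]
  ring_nf

lemma ofReal_netFlow_le (N : FlowNetwork V) (f : V → V → ℝ) (hf : IsFlow N f)
    (T : Finset V) (hT : IsCut N T) :
    ENNReal.ofReal (netFlow N f) ≤ cutCap N T := by
  have h1 : netFlow N f ≤ ∑ u ∈ T, ∑ v ∈ Tᶜ, f u v := by
    rw [netFlow_eq_cut N f hf T hT]
    have h0 : 0 ≤ ∑ u ∈ Tᶜ, ∑ v ∈ T, f u v :=
      Finset.sum_nonneg (fun u _ => Finset.sum_nonneg (fun v _ => hf.1 u v))
    linarith
  refine le_trans (ENNReal.ofReal_le_ofReal h1) ?_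
  rw [ENNReal.ofReal_sum_of_nonneg (fun u _ => Finset.sum_nonneg (fun v _ => hf.1 u v))]
  refine Finset.sum_le_sum (fun u _ => ?_)
  rw [ENNReal.ofReal_sum_of_nonneg (fun v _ => hf.1 u v)]
  exact Finset.sum_le_sum (fun v _ => hf.2.1 u v)

end CutLemmas

/-- for a max-flow `f`, `S_c` is contained in every min-cut; consequently
`S_c` is the unique smallest min-cut with respect to set inclusion. -/
theorem reachCut_smallest_minCut (N : FlowNetwork V) (f : V → V → ℝ)
    (hf : IsMaxFlow N f) (hfin : ∃ S, IsCut N S ∧ cutCap N S ≠ ⊤) :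
    (∀ S, IsMinCut N S → reachCut N f ⊆ S) ∧
    IsMinCut N (reachCut N f) ∧
    ∀ T, IsMinCut N T → (∀ S, IsMinCut N S → T ⊆ S) → T = reachCut N f := by
  classical
  obtain ⟨S₀, hS₀, hS₀fin⟩ := hfin
  have hst : N.s ≠ N.t := fun h => hS₀.2 (h ▸ hS₀.1)
  have hmem : ∀ w, w ∈ reachCut N f ↔ Relation.ReflTransGen (AugStep N f) N.s w := by
    intro w
    simp [reachCut]
  have hsSc : N.s ∈ reachCut N f := (hmem _).mpr Relation.ReflTransGen.refl
  have htSc : N.t ∉ reachCut N f := fun h => no_aug_path N f hf hst ((hmem _).mp h)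
  have hScCut : IsCut N (reachCut N f) := ⟨hsSc, htSc⟩
  have hsat : ∀ u ∈ reachCut N f, ∀ v, v ∉ reachCut N f →
      N.cap u v = ENNReal.ofReal (f u v) ∧ f v u = 0 := by
    intro u hu v hv
    have h : ¬ AugStep N f u v := fun hstep =>
      hv ((hmem v).mpr (Relation.ReflTransGen.tail ((hmem u).mp hu) hstep))
    rw [AugStep, not_or, not_lt, not_lt] at h
    exact ⟨le_antisymm h.1 (hf.1.2.1 u v), le_antisymm h.2 (hf.1.1 v u)⟩
  have hcutSc : cutCap N (reachCut N f)
      = ENNReal.ofReal (∑ u ∈ reachCut N f, ∑ v ∈ (reachCut N f)ᶜ, f u v) := by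
    rw [ENNReal.ofReal_sum_of_nonneg (fun u _ => Finset.sum_nonneg (fun v _ => hf.1.1 u v))]
    unfold cutCap
    refine Finset.sum_congr rfl (fun u hu => ?_)
    rw [ENNReal.ofReal_sum_of_nonneg (fun v _ => hf.1.1 u v)]
    exact Finset.sum_congr rfl (fun v hv => (hsat u hu v (Finset.mem_compl.mp hv)).1)
  have hfin0 : (∑ u ∈ (reachCut N f)ᶜ, ∑ v ∈ reachCut N f, f u v) = 0 := by
    refine Finset.sum_eq_zero (fun u hu => Finset.sum_eq_zero (fun v hv => ?_))
    exact (hsat v hv u (Finset.mem_compl.mp hu)).2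
  have hnetSc : netFlow N f = ∑ u ∈ reachCut N f, ∑ v ∈ (reachCut N f)ᶜ, f u v := by
    rw [netFlow_eq_cut N f hf.1 (reachCut N f) hScCut, hfin0]
    ring
  have hcutnet : cutCap N (reachCut N f) = ENNReal.ofReal (netFlow N f) := by
    rw [hcutSc, hnetSc]
  have hScMin : IsMinCut N (reachCut N f) := by
    refine ⟨hScCut, fun T hT => ?_⟩
    rw [hcutnet]
    exact ofReal_netFlow_le N f hf.1 T hT
  have hnet_nonneg : 0 ≤ netFlow N f := by
    rw [hnetSc]
    exact Finset.sum_nonneg (fun u _ => Finset.sum_nonneg (fun v _ => hf.1.1 u v))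
  have hsubset : ∀ S, IsMinCut N S → reachCut N f ⊆ S := by
    intro S hS
    have hcapS : cutCap N S = ENNReal.ofReal (netFlow N f) :=
      le_antisymm (hcutnet ▸ hS.2 (reachCut N f) hScCut) (ofReal_netFlow_le N f hf.1 S hS.1)
    have hcapfin : cutCap N S ≠ ⊤ := by
      rw [hcapS]; exact ENNReal.ofReal_ne_top
    have hinnerfin : ∀ u ∈ S, (∑ v ∈ Sᶜ, N.cap u v) ≠ ⊤ := by
      intro u hu
      exact ((ENNReal.sum_lt_top.mp (lt_top_iff_ne_top.mpr hcapfin)) u hu).ne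
    have hcap_each : ∀ u ∈ S, ∀ v ∈ Sᶜ, N.cap u v ≠ ⊤ := by
      intro u hu v hv
      exact ((ENNReal.sum_lt_top.mp (lt_top_iff_ne_top.mpr (hinnerfin u hu))) v hv).ne
    have htoReal : (cutCap N S).toReal = netFlow N f := by
      rw [hcapS, ENNReal.toReal_ofReal hnet_nonneg]
    have hcutS_toReal : (cutCap N S).toReal = ∑ u ∈ S, ∑ v ∈ Sᶜ, (N.cap u v).toReal := by
      unfold cutCap
      rw [ENNReal.toReal_sum hinnerfin]
      exact Finset.sum_congr rfl (fun u hu => ENNReal.toReal_sum (fun v hv => hcap_each u hu v hv))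
    have hpt : ∀ u ∈ S, ∀ v ∈ Sᶜ, f u v ≤ (N.cap u v).toReal := by
      intro u hu v hv
      exact (ENNReal.ofReal_le_iff_le_toReal (hcap_each u hu v hv)).mp (hf.1.2.1 u v)
    have hFinS_nonneg : 0 ≤ ∑ u ∈ Sᶜ, ∑ v ∈ S, f u v :=
      Finset.sum_nonneg (fun u _ => Finset.sum_nonneg (fun v _ => hf.1.1 u v))
    have hnetS := netFlow_eq_cut N f hf.1 S hS.1
    have hFout_le : ∑ u ∈ S, ∑ v ∈ Sᶜ, f u v ≤ netFlow N f := by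
      rw [← htoReal, hcutS_toReal]
      exact Finset.sum_le_sum (fun u hu => Finset.sum_le_sum (fun v hv => hpt u hu v hv))
    have hFin0 : ∑ u ∈ Sᶜ, ∑ v ∈ S, f u v = 0 := le_antisymm (by linarith) hFinS_nonneg
    have hFout_eq : ∑ u ∈ S, ∑ v ∈ Sᶜ, f u v = netFlow N f := by linarith
    have hzero : ∀ u ∈ Sᶜ, ∀ v ∈ S, f u v = 0 := by
      intro u hu v hv
      have h1 := (Finset.sum_eq_zero_iff_of_nonneg
        (fun u _ => Finset.sum_nonneg (fun v _ => hf.1.1 u v))).mp hFin0 u hu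
      exact (Finset.sum_eq_zero_iff_of_nonneg (fun v _ => hf.1.1 u v)).mp h1 v hv
    have hsatS : ∀ u ∈ S, ∀ v ∈ Sᶜ, f u v = (N.cap u v).toReal := by
      have hdiff : ∑ u ∈ S, ∑ v ∈ Sᶜ, ((N.cap u v).toReal - f u v) = 0 := by
        have : ∑ u ∈ S, ∑ v ∈ Sᶜ, ((N.cap u v).toReal - f u v)
            = (∑ u ∈ S, ∑ v ∈ Sᶜ, (N.cap u v).toReal) - (∑ u ∈ S, ∑ v ∈ Sᶜ, f u v) := by
          rw [← Finset.sum_sub_distrib]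
          exact Finset.sum_congr rfl (fun u _ => by rw [← Finset.sum_sub_distrib])
        rw [this, ← hcutS_toReal, htoReal, hFout_eq]
        ring
      intro u hu v hv
      have h1 := (Finset.sum_eq_zero_iff_of_nonneg
        (fun u hu => Finset.sum_nonneg (fun v hv => sub_nonneg.mpr (hpt u hu v hv)))).mp hdiff u hu
      have h2 := (Finset.sum_eq_zero_iff_of_nonneg
        (fun v hv => sub_nonneg.mpr (hpt u hu v hv))).mp h1 v hv
      linarith
    intro w hw
    have hr := (hmem w).mp hw
    clear hw
    induction hr with
    | refl => exact hS.1.1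
    | @tail b c hab hstep ih =>
      by_contra hc
      have hcS : c ∈ Sᶜ := Finset.mem_compl.mpr hc
      rcases hstep with hlt | hpos
      · rw [hsatS b ih c hcS, ENNReal.ofReal_toReal (hcap_each b ih c hcS)] at hlt
        exact lt_irrefl _ hlt
      · rw [hzero c hcS b ih] at hpos
        exact lt_irrefl 0 hpos
  refine ⟨hsubset, hScMin, fun T hT hTall => ?_⟩
  exact Finset.Subset.antisymm (hTall (reachCut N f) hScMin) (hsubset T hT)
end

section
/- Let S be a min-cut in the flow network D constructed from the undirected graph H. Then h(S) = {W : (W',W'') crosses out of S} is a minimum cost A–Y separator in H. -/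
open Finset
open scoped ENNReal

variable {V : Type} [Fintype V] [DecidableEq V]

/-- `Z` is an `A`–`Y` separator in `H`: disjoint from `{A, Y}` and
intersecting (the support of) every path between `A` and `Y`. -/
def IsSeparator (H : SimpleGraph V) (A Y : V) (Z : Finset V) : Prop :=
  A ∉ Z ∧ Y ∉ Z ∧ ∀ p : H.Walk A Y, ∃ w ∈ p.support, w ∈ Z

/-- The cost of a set of vertices. -/
noncomputable def sepCost (c : V → ℝ≥0∞) (Z : Finset V) : ℝ≥0∞ := ∑ w ∈ Z, c w

/-- A minimal separator: no proper subset is a separator. -/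
def IsMinimalSeparator (H : SimpleGraph V) (A Y : V) (Z : Finset V) : Prop :=
  IsSeparator H A Y Z ∧ ∀ Z' ⊂ Z, ¬ IsSeparator H A Y Z'

/-- A minimum cost separator. -/
def IsMinCostSeparator (H : SimpleGraph V) (A Y : V) (c : V → ℝ≥0∞) (Z : Finset V) : Prop :=
  IsSeparator H A Y Z ∧ ∀ Z', IsSeparator H A Y Z' → sepCost c Z ≤ sepCost c Z'

/-- The capacity function of the vertex-splitting flow network `D` associated with `H`:
each vertex `W` is split into `W' = Sum.inl W` and `W'' = Sum.inr W`, with an internal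
edge `W' → W''` of capacity `c W` (infinite when `W ∈ {A, Y}`), and for each undirected
edge `U − W` of `H`, infinite-capacity external edges `U'' → W'` and `W'' → U'`.
Capacity `0` means "no edge".  The source is `Y'' = Sum.inr Y`, the sink `A' = Sum.inl A`. -/
noncomputable def splitCap (H : SimpleGraph V) [DecidableRel H.Adj] (c : V → ℝ≥0∞) (A Y : V) :
    V ⊕ V → V ⊕ V → ℝ≥0∞
  | Sum.inl W, Sum.inr X => if W = X then (if W = A ∨ W = Y then ⊤ else c W) else 0
  | Sum.inr U, Sum.inl W => if H.Adj U W then ⊤ else 0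
  | _, _ => 0

/-- A cut in `D`: contains the source `Y''` and not the sink `A'`. -/
def IsCutD (A Y : V) (S : Finset (V ⊕ V)) : Prop :=
  Sum.inr Y ∈ S ∧ Sum.inl A ∉ S

/-- The capacity of a cut in `D`. -/
noncomputable def cutCapD (cap : V ⊕ V → V ⊕ V → ℝ≥0∞) (S : Finset (V ⊕ V)) : ℝ≥0∞ :=
  ∑ u ∈ S, ∑ v ∈ Sᶜ, cap u v

/-- A min-cut in `D`. -/
def IsMinCutD (A Y : V) (cap : V ⊕ V → V ⊕ V → ℝ≥0∞) (S : Finset (V ⊕ V)) : Prop :=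
  IsCutD A Y S ∧ ∀ T, IsCutD A Y T → cutCapD cap S ≤ cutCapD cap T

/-- `p` is a directed path from `a` to `b` in the directed graph whose edges are the
pairs of positive capacity. -/
def IsDiPath {α : Type} (cap : α → α → ℝ≥0∞) (p : List α) (a b : α) : Prop :=
  p.Chain' (fun u v => cap u v ≠ 0) ∧ p.head? = some a ∧ p.getLast? = some b

/-- The map `𝔡`: the set formed by `Y''` and all vertices of `D` lying on some directed
path from `Y''` to `W'` for some `W ∈ Z` that does not intersect `U'` or `U''` for any
other `U ∈ Z`. -/
noncomputable def dMap (H : SimpleGraph V) [DecidableRel H.Adj] (c : V → ℝ≥0∞) (A Y : V)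
    (Z : Finset V) : Finset (V ⊕ V) :=
  @Finset.filter (V ⊕ V)
    (fun x => x = Sum.inr Y ∨
      ∃ W ∈ Z, ∃ p : List (V ⊕ V), IsDiPath (splitCap H c A Y) p (Sum.inr Y) (Sum.inl W) ∧
        x ∈ p ∧ ∀ U ∈ Z, U ≠ W → Sum.inl U ∉ p ∧ Sum.inr U ∉ p)
    (fun _ => Classical.propDecidable _) Finset.univ

/-- The map `𝔥`: the set of vertices `W` of `H` whose internal edge `(W', W'')`
crosses from `S` to its complement. -/
def hMap (S : Finset (V ⊕ V)) : Finset V :=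
  Finset.univ.filter (fun W => Sum.inl W ∈ S ∧ Sum.inr W ∉ S)

/-- The relation `Z₁ ⊴ Z₂`: `Y` is separated from `Z₂ \ Z₁` by `Z₁`, and
`A` is separated from `Z₁ \ Z₂` by `Z₂`, in `H`. -/
def SepOrder (H : SimpleGraph V) (A Y : V) (Z₁ Z₂ : Finset V) : Prop :=
  (∀ W ∈ Z₂ \ Z₁, ∀ p : H.Walk Y W, ∃ u ∈ p.support, u ∈ Z₁) ∧
  (∀ W ∈ Z₁ \ Z₂, ∀ p : H.Walk A W, ∃ u ∈ p.support, u ∈ Z₂)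

/-! ### Auxiliary lemmas -/

lemma myCap_le_cut (cap : V ⊕ V → V ⊕ V → ℝ≥0∞) (S : Finset (V ⊕ V)) {u v : V ⊕ V}
    (hu : u ∈ S) (hv : v ∉ S) : cap u v ≤ cutCapD cap S := by
  calc cap u v ≤ ∑ v' ∈ Sᶜ, cap u v' :=
        Finset.single_le_sum (fun _ _ => zero_le) (Finset.mem_compl.mpr hv)
    _ ≤ _ := Finset.single_le_sum (f := fun u' => ∑ v' ∈ Sᶜ, cap u' v')
        (fun _ _ => zero_le) hu

lemma myNoTopCross (cap : V ⊕ V → V ⊕ V → ℝ≥0∞) (S : Finset (V ⊕ V))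
    (hfin : cutCapD cap S ≠ ⊤) {u v : V ⊕ V} (hu : u ∈ S) (htop : cap u v = ⊤) : v ∈ S := by
  by_contra hv
  exact hfin (top_le_iff.mp (htop ▸ myCap_le_cut cap S hu hv))

lemma myMemHMap (S : Finset (V ⊕ V)) (W : V) :
    W ∈ hMap S ↔ Sum.inl W ∈ S ∧ Sum.inr W ∉ S := by
  simp [hMap]

lemma myWalkInS (H : SimpleGraph V) [DecidableRel H.Adj] (c : V → ℝ≥0∞) (A Y : V)
    (S : Finset (V ⊕ V)) (hfin : cutCapD (splitCap H c A Y) S ≠ ⊤) :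
    ∀ {u : V} (q : H.Walk u A), Sum.inl u ∈ S → (∀ w ∈ q.support, w ∉ hMap S) →
      Sum.inl A ∈ S := by
  intro u q
  induction q with
  | nil => intro h _; exact h
  | @cons u v _ hadj q ih =>
    intro hu hsup
    have hu' : u ∉ hMap S := hsup u (by simp)
    have hinr : Sum.inr u ∈ S := by
      by_contra h
      exact hu' ((myMemHMap S u).mpr ⟨hu, h⟩)
    have hcap : splitCap H c A Y (Sum.inr u) (Sum.inl v) = ⊤ := by
      simp [splitCap, hadj]
    have hv : Sum.inl v ∈ S := myNoTopCross _ S hfin hinr hcap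
    exact ih hfin hv (fun w hw => hsup w
      (by rw [SimpleGraph.Walk.support_cons]; exact List.mem_cons_of_mem _ hw))

lemma myHMapSep (H : SimpleGraph V) [DecidableRel H.Adj] (c : V → ℝ≥0∞) (A Y : V)
    (hAY : A ≠ Y) (S : Finset (V ⊕ V)) (hcut : IsCutD A Y S)
    (hfin : cutCapD (splitCap H c A Y) S ≠ ⊤) :
    IsSeparator H A Y (hMap S) := by
  refine ⟨fun h => hcut.2 ((myMemHMap S A).mp h).1, fun h => ((myMemHMap S Y).mp h).2 hcut.1, ?_⟩
  intro p
  by_contra hp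
  push_neg at hp
  obtain ⟨v, hadj, q', hq⟩ := SimpleGraph.Walk.exists_eq_cons_of_ne (Ne.symm hAY) p.reverse
  have hqsup : ∀ w ∈ (SimpleGraph.Walk.cons hadj q').support, w ∉ hMap S := by
    rw [← hq, SimpleGraph.Walk.support_reverse]
    intro w hw
    exact hp w (List.mem_reverse.mp hw)
  have hcap : splitCap H c A Y (Sum.inr Y) (Sum.inl v) = ⊤ := by
    simp [splitCap, hadj]
  have hv : Sum.inl v ∈ S := myNoTopCross _ S hfin hcut.1 hcap
  exact hcut.2 (myWalkInS H c A Y S hfin q' hv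
    (fun w hw => hqsup w (by simp [hw])))

lemma myHMapCost (H : SimpleGraph V) [DecidableRel H.Adj] (c : V → ℝ≥0∞) (A Y : V)
    (S : Finset (V ⊕ V)) (hcut : IsCutD A Y S) :
    sepCost c (hMap S) ≤ cutCapD (splitCap H c A Y) S := by
  have h1 : sepCost c (hMap S)
      = ∑ W ∈ hMap S, splitCap H c A Y (Sum.inl W) (Sum.inr W) := by
    apply Finset.sum_congr rfl
    intro W hW
    obtain ⟨h1, h2⟩ := (myMemHMap S W).mp hW
    have hWA : W ≠ A := fun h => hcut.2 (h ▸ h1)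
    have hWY : W ≠ Y := fun h => h2 (h ▸ hcut.1)
    simp [splitCap, hWA, hWY]
  rw [h1]
  have h2 : ∑ W ∈ hMap S, splitCap H c A Y (Sum.inl W) (Sum.inr W)
      = ∑ p ∈ (hMap S).image (fun W => (Sum.inl W, Sum.inr W)),
          splitCap H c A Y p.1 p.2 := by
    rw [Finset.sum_image]
    intro a _ b _ h
    simpa using congrArg Prod.fst h
  rw [h2]
  have h3 : (hMap S).image (fun W => ((Sum.inl W : V ⊕ V), (Sum.inr W : V ⊕ V))) ⊆ S ×ˢ Sᶜ := by
    intro p hp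
    simp only [Finset.mem_image] at hp
    obtain ⟨W, hW, rfl⟩ := hp
    obtain ⟨hW1, hW2⟩ := (myMemHMap S W).mp hW
    simp [Finset.mem_product, hW1, hW2]
  calc ∑ p ∈ (hMap S).image (fun W => ((Sum.inl W : V ⊕ V), (Sum.inr W : V ⊕ V))),
          splitCap H c A Y p.1 p.2
      ≤ ∑ p ∈ S ×ˢ Sᶜ, splitCap H c A Y p.1 p.2 :=
        Finset.sum_le_sum_of_subset h3
    _ = cutCapD (splitCap H c A Y) S := by
        rw [cutCapD]; exact Finset.sum_product' ..

/-! ### Cut from a separator -/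

noncomputable def myReach (H : SimpleGraph V) (Y : V) (Z : Finset V) : Finset V :=
  @Finset.filter V (fun U => ∃ p : H.Walk Y U, ∀ w ∈ p.support, w ∉ Z)
    (fun _ => Classical.propDecidable _) Finset.univ

noncomputable def myG (c : V → ℝ≥0∞) (Z : Finset V) : V ⊕ V → V ⊕ V → ℝ≥0∞
  | Sum.inl W, Sum.inr X => if X = W ∧ W ∈ Z then c W else 0
  | _, _ => 0

noncomputable def myCutOf (H : SimpleGraph V) (Y : V) (Z : Finset V) : Finset (V ⊕ V) :=
  ((myReach H Y Z).image Sum.inl ∪ (myReach H Y Z).image Sum.inr) ∪ Z.image Sum.inl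

lemma myMemReach (H : SimpleGraph V) (Y : V) (Z : Finset V) (U : V) :
    U ∈ myReach H Y Z ↔ ∃ p : H.Walk Y U, ∀ w ∈ p.support, w ∉ Z := by
  simp [myReach]

lemma myMemCutOfInl (H : SimpleGraph V) (Y : V) (Z : Finset V) (W : V) :
    Sum.inl W ∈ myCutOf H Y Z ↔ W ∈ myReach H Y Z ∨ W ∈ Z := by
  simp [myCutOf]

lemma myMemCutOfInr (H : SimpleGraph V) (Y : V) (Z : Finset V) (W : V) :
    Sum.inr W ∈ myCutOf H Y Z ↔ W ∈ myReach H Y Z := by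
  simp [myCutOf]

lemma myCutOfIsCut (H : SimpleGraph V) (A Y : V) (Z : Finset V)
    (hZ : IsSeparator H A Y Z) : IsCutD A Y (myCutOf H Y Z) := by
  constructor
  · rw [myMemCutOfInr, myMemReach]
    exact ⟨SimpleGraph.Walk.nil, by intro w hw; simp at hw; subst hw; exact hZ.2.1⟩
  · rw [myMemCutOfInl]
    rintro (hA | hA)
    · rw [myMemReach] at hA
      obtain ⟨p, hp⟩ := hA
      obtain ⟨w, hw, hwZ⟩ := hZ.2.2 p.reverse
      rw [SimpleGraph.Walk.support_reverse, List.mem_reverse] at hw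
      exact hp w hw hwZ
    · exact hZ.1 hA

lemma myCutOfCap (H : SimpleGraph V) [DecidableRel H.Adj] (c : V → ℝ≥0∞) (A Y : V)
    (Z : Finset V) (hZ : IsSeparator H A Y Z) :
    cutCapD (splitCap H c A Y) (myCutOf H Y Z) ≤ sepCost c Z := by
  classical
  set T := myCutOf H Y Z with hT
  set g : V ⊕ V → V ⊕ V → ℝ≥0∞ := myG c Z with hg
  have hle : ∀ u ∈ T, ∀ v ∈ Tᶜ, splitCap H c A Y u v ≤ g u v := by
    rintro u hu v hv
    rw [Finset.mem_compl] at hv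
    match u, v with
    | Sum.inl W, Sum.inl X => simp [splitCap, hg, myG]
    | Sum.inr W, Sum.inr X => simp [splitCap, hg, myG]
    | Sum.inl W, Sum.inr X =>
      by_cases hWX : W = X
      · subst hWX
        have hW1 : W ∈ myReach H Y Z ∨ W ∈ Z := (myMemCutOfInl H Y Z W).mp hu
        have hW2 : W ∉ myReach H Y Z := fun h => hv ((myMemCutOfInr H Y Z W).mpr h)
        have hWZ : W ∈ Z := hW1.resolve_left hW2
        have hWA : W ≠ A := fun h => hZ.1 (h ▸ hWZ)
        have hWY : W ≠ Y := fun h => hZ.2.1 (h ▸ hWZ)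
        simp [splitCap, hg, myG, hWA, hWY, hWZ]
      · simp [splitCap, hg, myG, hWX]
    | Sum.inr U, Sum.inl W =>
      have hU : U ∈ myReach H Y Z := (myMemCutOfInr H Y Z U).mp hu
      have hW : W ∉ myReach H Y Z ∧ W ∉ Z := by
        have := fun h => hv ((myMemCutOfInl H Y Z W).mpr h)
        exact ⟨fun h => this (Or.inl h), fun h => this (Or.inr h)⟩
      by_cases hadj : H.Adj U W
      · exfalso
        obtain ⟨p, hp⟩ := (myMemReach H Y Z U).mp hU
        apply hW.1
        rw [myMemReach]
        refine ⟨p.concat hadj, ?_⟩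
        intro w hw
        rw [SimpleGraph.Walk.support_concat,
          List.mem_append, List.mem_singleton] at hw
        rcases hw with hw | hw
        · exact hp w hw
        · subst hw; exact hW.2
      · simp [splitCap, hadj]
  calc cutCapD (splitCap H c A Y) T ≤ ∑ u ∈ T, ∑ v ∈ Tᶜ, g u v := by
        apply Finset.sum_le_sum
        intro u hu
        exact Finset.sum_le_sum (fun v hv => hle u hu v hv)
    _ ≤ ∑ u : V ⊕ V, ∑ v ∈ Tᶜ, g u v :=
        Finset.sum_le_sum_of_subset (Finset.subset_univ T)
    _ ≤ ∑ u : V ⊕ V, ∑ v : V ⊕ V, g u v :=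
        Finset.sum_le_sum (fun u _ => Finset.sum_le_sum_of_subset (Finset.subset_univ Tᶜ))
    _ = ∑ W : V, ∑ v : V ⊕ V, g (Sum.inl W) v := by
        rw [Fintype.sum_sum_type]
        have : ∀ U : V, ∑ v : V ⊕ V, g (Sum.inr U) v = 0 := by
          intro U
          apply Finset.sum_eq_zero
          intro v _
          match v with
          | Sum.inl X => simp [hg, myG]
          | Sum.inr X => simp [hg, myG]
        simp [this]
    _ = ∑ W : V, if W ∈ Z then c W else 0 := by
        apply Finset.sum_congr rfl
        intro W _
        rw [Fintype.sum_sum_type]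
        have h1 : ∑ X : V, g (Sum.inl W) (Sum.inl X) = 0 :=
          Finset.sum_eq_zero (fun X _ => by simp [hg, myG])
        have h2 : ∑ X : V, g (Sum.inl W) (Sum.inr X)
            = if W ∈ Z then c W else 0 := by
          by_cases hWZ : W ∈ Z
          · have : ∀ X : V, g (Sum.inl W) (Sum.inr X) = if X = W then c W else 0 := by
              intro X; simp [hg, myG, hWZ]
            rw [Finset.sum_congr rfl (fun X _ => this X),
              Finset.sum_ite_eq' Finset.univ W (fun _ => c W)]
            simp [hWZ]
          · have : ∀ X : V, g (Sum.inl W) (Sum.inr X) = 0 := by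
              intro X; simp [hg, myG, hWZ]
            simp [this, hWZ]
        rw [h1, h2, zero_add]
    _ = sepCost c Z := by
        rw [sepCost, Finset.sum_ite_mem, Finset.univ_inter]

/-- if `S` is a min-cut in `D`, then `𝔥(S)` is a minimum cost
`A`–`Y` separator in `H`. -/
theorem hMap_isMinCostSeparator (H : SimpleGraph V) [DecidableRel H.Adj]
    (A Y : V) (c : V → ℝ≥0∞) (hcpos : ∀ w, 0 < c w) (hcfin : ∀ w, c w ≠ ⊤)
    (hsep : ∃ Z, IsSeparator H A Y Z)
    (S : Finset (V ⊕ V)) (hS : IsMinCutD A Y (splitCap H c A Y) S) :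
    IsMinCostSeparator H A Y c (hMap S) := by
  obtain ⟨Z₀, hZ₀⟩ := hsep
  have hAY : A ≠ Y := by
    intro h
    subst h
    obtain ⟨w, hw, hwZ⟩ := hZ₀.2.2 SimpleGraph.Walk.nil
    simp at hw
    subst hw
    exact hZ₀.1 hwZ
  have hcost_fin : ∀ Z : Finset V, sepCost c Z ≠ ⊤ := by
    intro Z
    rw [sepCost]
    exact (ENNReal.sum_lt_top.mpr (fun w _ => (hcfin w).lt_top)).ne
  have hfin : cutCapD (splitCap H c A Y) S ≠ ⊤ := by
    have h1 := hS.2 (myCutOf H Y Z₀) (myCutOfIsCut H A Y Z₀ hZ₀)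
    have h2 := myCutOfCap H c A Y Z₀ hZ₀
    exact fun h => hcost_fin Z₀ (top_le_iff.mp ((h ▸ h1).trans h2))
  refine ⟨myHMapSep H c A Y hAY S hS.1 hfin, ?_⟩
  intro Z' hZ'
  calc sepCost c (hMap S) ≤ cutCapD (splitCap H c A Y) S := myHMapCost H c A Y S hS.1
    _ ≤ cutCapD (splitCap H c A Y) (myCutOf H Y Z') :=
        hS.2 (myCutOf H Y Z') (myCutOfIsCut H A Y Z' hZ')
    _ ≤ sepCost c Z' := myCutOfCap H c A Y Z' hZ'
end

section
/- In a flow network where the capacity of every edge leaving a given cut S is finite and every edge crossing out of a min-cut is saturated while every edge crossing into a min-cut carries zero flow (under a fixed max-flow f*), the following holds: if S_c is the set of vertices reachable from the source by f*-augmenting paths (together with the source), then h(S_c) is a minimum cost A–Y separator in H and for every other minimum cost A–Y separator Z one has h(S_c) ⊴ Z (where ⊴ is the separation preorder: Y is separated from Z∖h(S_c) by h(S_c) and A is separated from h(S_c)∖Z by Z). -/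
open Finset
open scoped ENNReal

variable {V : Type} [Fintype V] [DecidableEq V]

/-- `f` is a flow on the network with capacity `cap`, source `s`, sink `t`. -/
def IsFlowD {α : Type} [Fintype α] (cap : α → α → ℝ≥0∞) (s t : α) (f : α → α → ℝ) : Prop :=
  (∀ u v, 0 ≤ f u v) ∧
  (∀ u v, ENNReal.ofReal (f u v) ≤ cap u v) ∧
  (∀ w, w ≠ s → w ≠ t → ∑ u, f u w = ∑ u, f w u)

/-- The total (net) flow into the sink. -/
def netFlowD {α : Type} [Fintype α] (t : α) (f : α → α → ℝ) : ℝ :=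
  ∑ u, f u t - ∑ u, f t u

/-- A max-flow. -/
def IsMaxFlowD {α : Type} [Fintype α] (cap : α → α → ℝ≥0∞) (s t : α)
    (f : α → α → ℝ) : Prop :=
  IsFlowD cap s t f ∧ ∀ g, IsFlowD cap s t g → netFlowD t g ≤ netFlowD t f

/-- One step of an augmenting path for `f`. -/
def AugStepD {α : Type} (cap : α → α → ℝ≥0∞) (f : α → α → ℝ) (u v : α) : Prop :=
  ENNReal.ofReal (f u v) < cap u v ∨ 0 < f v u

open scoped Classical in
/-- The set `S_c` of the source together with all vertices reachable from the source
by `f`-augmenting paths. -/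
noncomputable def reachCutD {α : Type} [Fintype α] (cap : α → α → ℝ≥0∞)
    (f : α → α → ℝ) (s : α) : Finset α :=
  Finset.univ.filter (fun W => Relation.ReflTransGen (AugStepD cap f) s W)

/-! ### Auxiliary lemmas -/

section Aux

variable {H : SimpleGraph V} [DecidableRel H.Adj] {A Y : V} {c : V → ℝ≥0∞}

lemma cap_le_cutCapD {cap : V ⊕ V → V ⊕ V → ℝ≥0∞} {S : Finset (V ⊕ V)} {u v : V ⊕ V}
    (hu : u ∈ S) (hv : v ∉ S) : cap u v ≤ cutCapD cap S := by
  calc cap u v ≤ ∑ w ∈ Sᶜ, cap u w :=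
        Finset.single_le_sum (fun _ _ => zero_le) (Finset.mem_compl.2 hv)
    _ ≤ cutCapD cap S :=
        Finset.single_le_sum (f := fun x => ∑ w ∈ Sᶜ, cap x w) (fun _ _ => zero_le) hu

lemma splitCap_adj {u w : V} (h : H.Adj u w) :
    splitCap H c A Y (Sum.inr u) (Sum.inl w) = ⊤ := by
  simp [splitCap, h]

lemma mem_hMap {S : Finset (V ⊕ V)} {w : V} :
    w ∈ hMap S ↔ Sum.inl w ∈ S ∧ Sum.inr w ∉ S := by
  simp [hMap]

/-- Walking in `H` from a vertex whose `inr`-copy lies in a finite-capacity set `S`,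
either we meet a vertex of `hMap S` or the endpoint stays inside. -/
lemma crossWalk {S : Finset (V ⊕ V)} (hfin : cutCapD (splitCap H c A Y) S ≠ ⊤)
    {x y : V} (p : H.Walk x y) (hx : Sum.inr x ∈ S) :
    (∃ w ∈ p.support, w ∈ hMap S) ∨ (Sum.inr y ∈ S ∧ (Sum.inl y ∈ S ∨ x = y)) := by
  induction p with
  | nil => exact Or.inr ⟨hx, Or.inr rfl⟩
  | @cons a b z h q ih =>
    have hb1 : Sum.inl b ∈ S := by
      by_contra hb
      exact hfin (top_le_iff.mp (splitCap_adj (c := c) (A := A) (Y := Y) h ▸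
        cap_le_cutCapD hx hb))
    by_cases hb2 : Sum.inr b ∈ S
    · rcases ih hb2 with ⟨w, hw, hwm⟩ | ⟨h1, h2⟩
      · exact Or.inl ⟨w, by simp [SimpleGraph.Walk.support_cons, hw], hwm⟩
      · exact Or.inr ⟨h1, Or.inl (h2.elim id (fun e => e ▸ hb1))⟩
    · exact Or.inl ⟨b, by simp [SimpleGraph.Walk.support_cons,
        SimpleGraph.Walk.start_mem_support], mem_hMap.2 ⟨hb1, hb2⟩⟩

lemma sepCost_hMap_le (S : Finset (V ⊕ V)) :
    sepCost c (hMap S) ≤ cutCapD (splitCap H c A Y) S := by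
  calc sepCost c (hMap S) = ∑ w ∈ hMap S, c w := rfl
    _ ≤ ∑ w ∈ hMap S, splitCap H c A Y (Sum.inl w) (Sum.inr w) := by
        refine Finset.sum_le_sum fun w _ => ?_
        have hc : splitCap H c A Y (Sum.inl w) (Sum.inr w) =
            if w = A ∨ w = Y then ⊤ else c w := by simp [splitCap]
        rw [hc]; split_ifs; exacts [le_top, le_rfl]
    _ ≤ ∑ w ∈ hMap S, ∑ v ∈ Sᶜ, splitCap H c A Y (Sum.inl w) v := by
        refine Finset.sum_le_sum fun w hw => ?_
        exact Finset.single_le_sum (fun _ _ => zero_le)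
          (Finset.mem_compl.2 (mem_hMap.1 hw).2)
    _ = ∑ u ∈ (hMap S).image Sum.inl, ∑ v ∈ Sᶜ, splitCap H c A Y u v :=
        (Finset.sum_image (g := Sum.inl)
          (f := fun u => ∑ v ∈ Sᶜ, splitCap H c A Y u v)
          (fun _ _ _ _ h => Sum.inl_injective h)).symm
    _ ≤ ∑ u ∈ S, ∑ v ∈ Sᶜ, splitCap H c A Y u v := by
        refine Finset.sum_le_sum_of_subset ?_
        intro u hu
        obtain ⟨w, hw, rfl⟩ := Finset.mem_image.1 hu
        exact (mem_hMap.1 hw).1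
    _ = cutCapD (splitCap H c A Y) S := rfl

open scoped Classical in
/-- Vertices reachable from `Y` by a walk all of whose `Z`-vertices equal the endpoint. -/
noncomputable def sepR1 (H : SimpleGraph V) (Y : V) (Z : Finset V) : Finset V :=
  Finset.univ.filter (fun u => ∃ p : H.Walk Y u, ∀ v ∈ p.support, v ∈ Z → v = u)

open scoped Classical in
/-- Vertices reachable from `Y` by a walk avoiding `Z`. -/
noncomputable def sepR0 (H : SimpleGraph V) (Y : V) (Z : Finset V) : Finset V :=
  Finset.univ.filter (fun u => ∃ p : H.Walk Y u, ∀ v ∈ p.support, v ∉ Z)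

/-- The cut `𝔡(Z)` associated with a separator `Z`. -/
noncomputable def dCut (H : SimpleGraph V) (Y : V) (Z : Finset V) : Finset (V ⊕ V) :=
  (sepR1 H Y Z).image Sum.inl ∪ (sepR0 H Y Z).image Sum.inr

lemma mem_sepR1 {Z : Finset V} {u : V} :
    u ∈ sepR1 H Y Z ↔ ∃ p : H.Walk Y u, ∀ v ∈ p.support, v ∈ Z → v = u := by
  simp [sepR1]

lemma mem_sepR0 {Z : Finset V} {u : V} :
    u ∈ sepR0 H Y Z ↔ ∃ p : H.Walk Y u, ∀ v ∈ p.support, v ∉ Z := by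
  simp [sepR0]

lemma inl_mem_dCut {Z : Finset V} {u : V} :
    Sum.inl u ∈ dCut H Y Z ↔ u ∈ sepR1 H Y Z := by
  simp [dCut]

lemma inr_mem_dCut {Z : Finset V} {u : V} :
    Sum.inr u ∈ dCut H Y Z ↔ u ∈ sepR0 H Y Z := by
  simp [dCut]

lemma sepR0_subset_sepR1 {Z : Finset V} : sepR0 H Y Z ⊆ sepR1 H Y Z := by
  intro u hu
  obtain ⟨p, hp⟩ := mem_sepR0.1 hu
  exact mem_sepR1.2 ⟨p, fun v hv hvZ => absurd hvZ (hp v hv)⟩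

lemma sepR0_disj {Z : Finset V} {u : V} (hu : u ∈ sepR0 H Y Z) : u ∉ Z := by
  obtain ⟨p, hp⟩ := mem_sepR0.1 hu
  exact hp u p.end_mem_support

lemma sepR1_mem_Z {Z : Finset V} {u : V} (hu : u ∈ sepR1 H Y Z)
    (hu0 : u ∉ sepR0 H Y Z) : u ∈ Z := by
  by_contra huZ
  obtain ⟨p, hp⟩ := mem_sepR1.1 hu
  exact hu0 (mem_sepR0.2 ⟨p, fun v hv hvZ => huZ ((hp v hv hvZ) ▸ hvZ)⟩)

lemma dCut_isCut {Z : Finset V} (hZ : IsSeparator H A Y Z) :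
    IsCutD A Y (dCut H Y Z) := by
  constructor
  · exact inr_mem_dCut.2 (mem_sepR0.2 ⟨SimpleGraph.Walk.nil, by
      intro v hv; simp at hv; subst hv; exact hZ.2.1⟩)
  · intro hA
    obtain ⟨p, hp⟩ := mem_sepR1.1 (inl_mem_dCut.1 hA)
    have hp' : ∀ v ∈ p.support, v ∉ Z := fun v hv hvZ => hZ.1 ((hp v hv hvZ) ▸ hvZ)
    obtain ⟨w, hw, hwZ⟩ := hZ.2.2 p.reverse
    exact hp' w (by simpa [SimpleGraph.Walk.support_reverse] using hw) hwZ

lemma cutCapD_dCut_le {Z : Finset V} (hZ : IsSeparator H A Y Z) :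
    cutCapD (splitCap H c A Y) (dCut H Y Z) ≤ sepCost c Z := by
  classical
  set SZ := dCut H Y Z with hSZ
  have key : ∀ u ∈ SZ, ∑ v ∈ SZᶜ, splitCap H c A Y u v ≤
      (Sum.elim (fun w => if w ∈ Z then c w else 0) (fun _ => 0) u) := by
    rintro (w | w) hu
    · -- u = inl w, w ∈ sepR1
      have hw1 : w ∈ sepR1 H Y Z := inl_mem_dCut.1 hu
      have hb : ∀ v ∈ SZᶜ, splitCap H c A Y (Sum.inl w) v ≤
          (if v = (Sum.inr w : V ⊕ V) then (if w ∈ Z then c w else 0) else 0) := by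
        rintro (x | x) hv
        · simp [splitCap]
        · rcases eq_or_ne w x with rfl | hwx
          · have hw0 : w ∉ sepR0 H Y Z := fun h =>
              (Finset.mem_compl.1 hv) (inr_mem_dCut.2 h)
            have hwZ : w ∈ Z := sepR1_mem_Z hw1 hw0
            have hwA : w ≠ A := fun e => hZ.1 (e ▸ hwZ)
            have hwY : w ≠ Y := fun e => hZ.2.1 (e ▸ hwZ)
            simp [splitCap, hwA, hwY, hwZ]
          · simp [splitCap, hwx, Ne.symm hwx]
      calc ∑ v ∈ SZᶜ, splitCap H c A Y (Sum.inl w) v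
          ≤ ∑ v ∈ SZᶜ, (if v = (Sum.inr w : V ⊕ V) then (if w ∈ Z then c w else 0) else 0) :=
            Finset.sum_le_sum hb
        _ ≤ ∑ v : V ⊕ V, (if v = (Sum.inr w : V ⊕ V) then (if w ∈ Z then c w else 0) else 0) :=
            Finset.sum_le_sum_of_subset (Finset.subset_univ _)
        _ = (if w ∈ Z then c w else 0) := by simp
        _ = Sum.elim (fun w => if w ∈ Z then c w else 0) (fun _ => 0) (Sum.inl w : V ⊕ V) := rfl
    · -- u = inr w, w ∈ sepR0
      have hw0 : w ∈ sepR0 H Y Z := inr_mem_dCut.1 hu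
      refine le_of_eq (Finset.sum_eq_zero ?_)
      rintro (x | x) hv
      · by_cases hadj : H.Adj w x
        · exfalso
          obtain ⟨p, hp⟩ := mem_sepR0.1 hw0
          have hx1 : x ∈ sepR1 H Y Z := by
            refine mem_sepR1.2 ⟨p.concat hadj, ?_⟩
            intro v hv' hvZ
            rw [SimpleGraph.Walk.support_concat,
              List.mem_append] at hv'
            rcases hv' with hv' | hv'
            · exact absurd hvZ (hp v hv')
            · simpa using hv'
          exact (Finset.mem_compl.1 hv) (inl_mem_dCut.2 hx1)
        · simp [splitCap, hadj]
      · simp [splitCap]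
  calc cutCapD (splitCap H c A Y) SZ
      ≤ ∑ u ∈ SZ, Sum.elim (fun w => if w ∈ Z then c w else 0) (fun _ => 0) u :=
        Finset.sum_le_sum key
    _ ≤ ∑ u : V ⊕ V, Sum.elim (fun w => if w ∈ Z then c w else 0) (fun _ => 0) u :=
        Finset.sum_le_sum_of_subset (Finset.subset_univ _)
    _ = ∑ w : V, (if w ∈ Z then c w else 0) := by
        rw [Fintype.sum_sum_type]; simp
    _ = sepCost c Z := by
        rw [sepCost, Finset.sum_ite_mem, Finset.univ_inter]

/-! ### Flow lemmas -/

lemma flow_value_eq {α : Type} [Fintype α] [DecidableEq α] {cap : α → α → ℝ≥0∞}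
    {s t : α} {f : α → α → ℝ} (hf : IsFlowD cap s t f) (hst : s ≠ t)
    {S : Finset α} (hs : s ∈ S) (ht : t ∉ S) :
    (∑ u ∈ S, ∑ v ∈ Sᶜ, f u v) - (∑ u ∈ S, ∑ v ∈ Sᶜ, f v u) = netFlowD t f := by
  have hcons : ∀ w, w ≠ s → w ≠ t → (∑ v, f w v) - (∑ v, f v w) = 0 := by
    intro w hws hwt
    have := hf.2.2 w hws hwt
    linarith
  have h1 : ∑ w ∈ S, ((∑ v, f w v) - (∑ v, f v w)) = (∑ v, f s v) - (∑ v, f v s) := by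
    refine Finset.sum_eq_single_of_mem s hs fun w hw hne => ?_
    exact hcons w hne (fun e => ht (e ▸ hw))
  have h2 : ∑ w ∈ S, ((∑ v, f w v) - (∑ v, f v w)) =
      (∑ u ∈ S, ∑ v ∈ Sᶜ, f u v) - (∑ u ∈ S, ∑ v ∈ Sᶜ, f v u) := by
    rw [Finset.sum_sub_distrib]
    have e1 : ∑ w ∈ S, ∑ v, f w v = ∑ w ∈ S, ∑ v ∈ S, f w v + ∑ w ∈ S, ∑ v ∈ Sᶜ, f w v := by
      rw [← Finset.sum_add_distrib]
      exact Finset.sum_congr rfl fun w _ => (Finset.sum_add_sum_compl S _).symm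
    have e2 : ∑ w ∈ S, ∑ v, f v w = ∑ w ∈ S, ∑ v ∈ S, f v w + ∑ w ∈ S, ∑ v ∈ Sᶜ, f v w := by
      rw [← Finset.sum_add_distrib]
      exact Finset.sum_congr rfl fun w _ => (Finset.sum_add_sum_compl S _).symm
    have e3 : ∑ w ∈ S, ∑ v ∈ S, f w v = ∑ w ∈ S, ∑ v ∈ S, f v w := Finset.sum_comm
    rw [e1, e2, e3]
    ring
  have htot : ∑ w, ((∑ v, f w v) - (∑ v, f v w)) = 0 := by
    rw [Finset.sum_sub_distrib]
    rw [Finset.sum_comm (s := Finset.univ) (t := Finset.univ) (f := fun w v => f w v)]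
    exact sub_self _
  have hpair : ((∑ v, f s v) - (∑ v, f v s)) + ((∑ v, f t v) - (∑ v, f v t)) = 0 := by
    have hsub : ∑ w ∈ ({s, t} : Finset α), ((∑ v, f w v) - (∑ v, f v w)) =
        ∑ w, ((∑ v, f w v) - (∑ v, f v w)) := by
      refine Finset.sum_subset (Finset.subset_univ _) fun w _ hw => ?_
      simp only [Finset.mem_insert, Finset.mem_singleton, not_or] at hw
      exact hcons w hw.1 hw.2
    rw [Finset.sum_pair hst] at hsub
    rw [hsub, htot]
  have hnet : netFlowD t f = (∑ v, f v t) - (∑ v, f t v) := rfl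
  linarith [h1, h2, hpair]

/-- A cut all of whose outgoing edges are saturated and incoming edges carry no flow
has capacity equal to the net flow value. -/
lemma satCut_eq {α : Type} [Fintype α] [DecidableEq α] {cap : α → α → ℝ≥0∞}
    {s t : α} {f : α → α → ℝ} (hf : IsFlowD cap s t f) (hst : s ≠ t)
    {S : Finset α} (hs : s ∈ S) (ht : t ∉ S)
    (hsat1 : ∀ u ∈ S, ∀ v ∈ Sᶜ, ENNReal.ofReal (f u v) = cap u v)
    (hsat2 : ∀ u ∈ Sᶜ, ∀ v ∈ S, f u v = 0) :
    (∑ u ∈ S, ∑ v ∈ Sᶜ, cap u v) = ENNReal.ofReal (netFlowD t f) := by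
  have hzero : (∑ u ∈ S, ∑ v ∈ Sᶜ, f v u) = 0 :=
    Finset.sum_eq_zero fun u hu => Finset.sum_eq_zero fun v hv => hsat2 v hv u hu
  have hval := flow_value_eq hf hst hs ht
  rw [hzero, sub_zero] at hval
  calc (∑ u ∈ S, ∑ v ∈ Sᶜ, cap u v)
      = ∑ u ∈ S, ∑ v ∈ Sᶜ, ENNReal.ofReal (f u v) :=
        Finset.sum_congr rfl fun u hu => Finset.sum_congr rfl fun v hv =>
          (hsat1 u hu v hv).symm
    _ = ∑ u ∈ S, ENNReal.ofReal (∑ v ∈ Sᶜ, f u v) :=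
        Finset.sum_congr rfl fun u _ =>
          (ENNReal.ofReal_sum_of_nonneg fun v _ => hf.1 u v).symm
    _ = ENNReal.ofReal (∑ u ∈ S, ∑ v ∈ Sᶜ, f u v) :=
        (ENNReal.ofReal_sum_of_nonneg fun u _ =>
          Finset.sum_nonneg fun v _ => hf.1 u v).symm
    _ = ENNReal.ofReal (netFlowD t f) := by rw [hval]

lemma mem_reachCutD {α : Type} [Fintype α] {cap : α → α → ℝ≥0∞} {f : α → α → ℝ}
    {s u : α} : u ∈ reachCutD cap f s ↔ Relation.ReflTransGen (AugStepD cap f) s u := by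
  simp [reachCutD]

lemma source_mem_reachCutD {α : Type} [Fintype α] {cap : α → α → ℝ≥0∞} {f : α → α → ℝ}
    {s : α} : s ∈ reachCutD cap f s := mem_reachCutD.2 Relation.ReflTransGen.refl

/-- The reachable set is contained in every saturated cut containing the source. -/
lemma reachCutD_subset {α : Type} [Fintype α] [DecidableEq α] {cap : α → α → ℝ≥0∞} {f : α → α → ℝ}
    {s : α} {M : Finset α} (hs : s ∈ M)
    (hsat1 : ∀ u ∈ M, ∀ v ∈ Mᶜ, ENNReal.ofReal (f u v) = cap u v)
    (hsat2 : ∀ u ∈ Mᶜ, ∀ v ∈ M, f u v = 0) :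
    reachCutD cap f s ⊆ M := by
  intro u hu
  induction mem_reachCutD.1 hu with
  | refl => exact hs
  | @tail b v hb hstep ih =>
    have hbM : b ∈ M := ih (mem_reachCutD.2 hb)
    by_contra hvM
    rcases hstep with hlt | hpos
    · rw [hsat1 b hbM v (Finset.mem_compl.2 hvM)] at hlt
      exact lt_irrefl _ hlt
    · rw [hsat2 v (Finset.mem_compl.2 hvM) b hbM] at hpos
      exact lt_irrefl _ hpos

/-- Edges leaving the reachable set are saturated. -/
lemma reachCutD_sat1 {α : Type} [Fintype α] [DecidableEq α] {cap : α → α → ℝ≥0∞}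
    {s t : α} {f : α → α → ℝ} (hf : IsFlowD cap s t f)
    {u v : α} (hu : u ∈ reachCutD cap f s) (hv : v ∉ reachCutD cap f s) :
    ENNReal.ofReal (f u v) = cap u v := by
  have hno : ¬ AugStepD cap f u v := fun h =>
    hv (mem_reachCutD.2 ((mem_reachCutD.1 hu).tail h))
  rw [AugStepD] at hno; push_neg at hno
  exact le_antisymm (hf.2.1 u v) hno.1

/-- Edges entering the reachable set carry no flow. -/
lemma reachCutD_sat2 {α : Type} [Fintype α] [DecidableEq α] {cap : α → α → ℝ≥0∞}
    {s t : α} {f : α → α → ℝ} (hf : IsFlowD cap s t f)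
    {u v : α} (hu : u ∉ reachCutD cap f s) (hv : v ∈ reachCutD cap f s) :
    f u v = 0 := by
  have hno : ¬ AugStepD cap f v u := fun h =>
    hu (mem_reachCutD.2 ((mem_reachCutD.1 hv).tail h))
  rw [AugStepD] at hno; push_neg at hno
  exact le_antisymm hno.2 (hf.1 u v)

lemma exists_minCutD (A Y : V) (cap : V ⊕ V → V ⊕ V → ℝ≥0∞) :
    ∃ M, IsMinCutD A Y cap M := by
  classical
  have hne : (Finset.univ.filter (fun S : Finset (V ⊕ V) => IsCutD A Y S)).Nonempty := by
    refine ⟨{Sum.inr Y}, Finset.mem_filter.2 ⟨Finset.mem_univ _, ?_, ?_⟩⟩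
    · exact Finset.mem_singleton_self _
    · simp
  obtain ⟨M, hM, hmin⟩ := Finset.exists_min_image _ (cutCapD cap) hne
  refine ⟨M, (Finset.mem_filter.1 hM).2, fun T hT => ?_⟩
  exact hmin T (Finset.mem_filter.2 ⟨Finset.mem_univ _, hT⟩)

end Aux

/-- for the vertex-splitting network `D` of `H` with a max-flow `f`
(assuming some finite-capacity cut exists and that under `f` every edge crossing out of
a min-cut is saturated while every edge crossing into a min-cut carries zero flow),
`𝔥(S_c)` is a minimum cost `A`–`Y` separator and `𝔥(S_c) ⊴ Z` for every other minimum
cost `A`–`Y` separator `Z`. -/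
theorem hMap_reachCut_optimal (H : SimpleGraph V) [DecidableRel H.Adj]
    (A Y : V) (c : V → ℝ≥0∞) (hcpos : ∀ w, 0 < c w) (hcfin : ∀ w, c w ≠ ⊤)
    (hsep : ∃ Z, IsSeparator H A Y Z)
    (f : V ⊕ V → V ⊕ V → ℝ)
    (hf : IsMaxFlowD (splitCap H c A Y) (Sum.inr Y) (Sum.inl A) f)
    (hfin : ∃ S, IsCutD A Y S ∧ cutCapD (splitCap H c A Y) S ≠ ⊤)
    (hsat : ∀ S, IsMinCutD A Y (splitCap H c A Y) S →
      (∀ u ∈ S, ∀ v ∈ Sᶜ, ENNReal.ofReal (f u v) = splitCap H c A Y u v) ∧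
      (∀ u ∈ Sᶜ, ∀ v ∈ S, f u v = 0)) :
    IsMinCostSeparator H A Y c
      (hMap (reachCutD (splitCap H c A Y) f (Sum.inr Y))) ∧
    ∀ Z, IsMinCostSeparator H A Y c Z →
      SepOrder H A Y (hMap (reachCutD (splitCap H c A Y) f (Sum.inr Y))) Z := by
  classical
  set cap := splitCap H c A Y with hcap
  set Sc := reachCutD cap f (Sum.inr Y) with hSc
  -- A ≠ Y
  have hAY : A ≠ Y := by
    rintro rfl
    obtain ⟨Z, hZA, _, hhit⟩ := hsep
    obtain ⟨w, hw, hwZ⟩ := hhit SimpleGraph.Walk.nil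
    simp only [SimpleGraph.Walk.support_nil, List.mem_singleton] at hw
    exact hZA (hw ▸ hwZ)
  have hst : (Sum.inr Y : V ⊕ V) ≠ Sum.inl A := by simp
  -- a min-cut exists
  obtain ⟨M, hM⟩ := exists_minCutD A Y cap
  obtain ⟨hMs1, hMs2⟩ := hsat M hM
  -- Sc is contained in every min-cut
  have hsub : ∀ T, IsMinCutD A Y cap T → Sc ⊆ T := by
    intro T hT
    obtain ⟨hTs1, hTs2⟩ := hsat T hT
    exact reachCutD_subset hT.1.1 hTs1 hTs2
  -- Sc is a cut
  have hScCut : IsCutD A Y Sc := ⟨source_mem_reachCutD, fun h => hM.1.2 (hsub M hM h)⟩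
  -- value of saturated cuts
  have hvalSc : cutCapD cap Sc = ENNReal.ofReal (netFlowD (Sum.inl A) f) :=
    satCut_eq hf.1 hst hScCut.1 hScCut.2
      (fun u hu v hv => reachCutD_sat1 hf.1 hu (Finset.mem_compl.1 hv))
      (fun u hu v hv => reachCutD_sat2 hf.1 (Finset.mem_compl.1 hu) hv)
  have hvalM : cutCapD cap M = ENNReal.ofReal (netFlowD (Sum.inl A) f) :=
    satCut_eq hf.1 hst hM.1.1 hM.1.2 hMs1 hMs2
  -- Sc is a min-cut
  have hScMin : IsMinCutD A Y cap Sc := by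
    refine ⟨hScCut, fun T hT => ?_⟩
    rw [hvalSc, ← hvalM]
    exact hM.2 T hT
  have hScFin : cutCapD cap Sc ≠ ⊤ := by
    rw [hvalSc]; exact ENNReal.ofReal_ne_top
  -- hMap Sc is a separator
  have hsepSc : IsSeparator H A Y (hMap Sc) := by
    refine ⟨fun h => hScCut.2 (mem_hMap.1 h).1, fun h => (mem_hMap.1 h).2 hScCut.1, ?_⟩
    intro p
    rcases crossWalk hScFin p.reverse hScCut.1 with ⟨w, hw, hwm⟩ | ⟨_, h2⟩
    · exact ⟨w, by simpa [SimpleGraph.Walk.support_reverse] using hw, hwm⟩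
    · rcases h2 with h2 | h2
      · exact absurd h2 hScCut.2
      · exact absurd h2.symm hAY
  -- hMap Sc is a minimum cost separator
  have hmincost : IsMinCostSeparator H A Y c (hMap Sc) := by
    refine ⟨hsepSc, fun Z' hZ' => ?_⟩
    calc sepCost c (hMap Sc) ≤ cutCapD cap Sc := sepCost_hMap_le Sc
      _ ≤ cutCapD cap (dCut H Y Z') := hScMin.2 _ (dCut_isCut hZ')
      _ ≤ sepCost c Z' := cutCapD_dCut_le hZ'
  refine ⟨hmincost, ?_⟩
  -- the ordering part
  rintro Z ⟨hZsep, hZmin⟩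
  have hDZcut : IsCutD A Y (dCut H Y Z) := dCut_isCut hZsep
  have hDZmin : IsMinCutD A Y cap (dCut H Y Z) := by
    refine ⟨hDZcut, fun T hT => ?_⟩
    calc cutCapD cap (dCut H Y Z) ≤ sepCost c Z := cutCapD_dCut_le hZsep
      _ ≤ sepCost c (hMap Sc) := hZmin _ hsepSc
      _ ≤ cutCapD cap Sc := sepCost_hMap_le Sc
      _ ≤ cutCapD cap T := hScMin.2 T hT
  have hScDZ : Sc ⊆ dCut H Y Z := hsub _ hDZmin
  constructor
  · -- Y is separated from Z \ hMap Sc by hMap Sc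
    intro W hW p
    rw [Finset.mem_sdiff] at hW
    have hinrW : Sum.inr W ∉ Sc := fun h => sepR0_disj (inr_mem_dCut.1 (hScDZ h)) hW.1
    rcases crossWalk hScFin p hScCut.1 with ⟨w, hw, hwm⟩ | ⟨h1, _⟩
    · exact ⟨w, hw, hwm⟩
    · exact absurd h1 hinrW
  · -- A is separated from hMap Sc \ Z by Z
    intro W hW p
    rw [Finset.mem_sdiff] at hW
    have hinlW : Sum.inl W ∈ dCut H Y Z := hScDZ (mem_hMap.1 hW.1).1
    obtain ⟨q, hq⟩ := mem_sepR1.1 (inl_mem_dCut.1 hinlW)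
    have hq' : ∀ v ∈ q.support, v ∉ Z := fun v hv hvZ => hW.2 ((hq v hv hvZ) ▸ hvZ)
    by_contra hnone
    push_neg at hnone
    obtain ⟨u, hu, huZ⟩ := hZsep.2.2 (p.append q.reverse)
    rw [SimpleGraph.Walk.support_append, List.mem_append] at hu
    rcases hu with hu | hu
    · exact hnone u hu huZ
    · refine hq' u ?_ huZ
      have := List.mem_of_mem_tail hu
      rwa [SimpleGraph.Walk.support_reverse, List.mem_reverse] at this
end

section
/- Let D be a flow network in which every edge crossing from a min-cut S to its complement is an internal edge of the form (W',W''). If S and S' are min-cuts with S ⊆ S', then for any vertex W with W' ∈ S' and W'' ∉ S' but not (W' ∈ S and W'' ∉ S), and any directed path from the source Y'' to W' in D alternating external (infinite capacity) and internal edges, the path must contain an internal edge crossing out of S. -/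
open Finset
open scoped ENNReal

variable {V : Type} [Fintype V] [DecidableEq V]

lemma exists_cross {α : Type} (P : α → Prop) (R : α → α → Prop) :
    ∀ (p : List α), p.Chain' R → ∀ a b, p.head? = some a → p.getLast? = some b →
      P a → ¬ P b → ∃ u v, P u ∧ ¬ P v ∧ R u v ∧ (u, v) ∈ p.zip p.tail := by
  intro p
  induction p with
  | nil => intro _ a b h; simp at h
  | cons x l ih =>
    intro hc a b ha hb hPa hPb
    simp only [List.head?_cons, Option.some.injEq] at ha
    subst ha
    cases l with
    | nil =>
      simp only [List.getLast?_singleton, Option.some.injEq] at hb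
      subst hb; exact absurd hPa hPb
    | cons y l' =>
      change List.IsChain R (x :: y :: l') at hc
      rw [List.isChain_cons_cons] at hc
      rw [List.getLast?_cons_cons] at hb
      by_cases hy : P y
      · obtain ⟨u, v, h1, h2, h3, h4⟩ := ih hc.2 y b rfl hb hy hPb
        exact ⟨u, v, h1, h2, h3, by simp [List.mem_cons]; right; exact h4⟩
      · exact ⟨x, y, hPa, hy, hc.1, by simp⟩

/-- suppose every edge crossing out of a min-cut of `D` is internal.
If `S ⊆ S'` are min-cuts, `W` satisfies `W' ∈ S'`, `W'' ∉ S'` but not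
(`W' ∈ S` and `W'' ∉ S`), then any directed path in `D` from the source `Y''` to `W'`
contains an internal edge crossing out of `S`. -/
theorem path_crosses_smaller_minCut (H : SimpleGraph V) [DecidableRel H.Adj]
    (A Y : V) (c : V → ℝ≥0∞) (hcpos : ∀ w, 0 < c w) (hcfin : ∀ w, c w ≠ ⊤)
    (hint : ∀ T, IsMinCutD A Y (splitCap H c A Y) T →
      ∀ u ∈ T, ∀ v ∈ Tᶜ, splitCap H c A Y u v ≠ 0 →
        ∃ W : V, u = Sum.inl W ∧ v = Sum.inr W)
    (S S' : Finset (V ⊕ V))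
    (hS : IsMinCutD A Y (splitCap H c A Y) S)
    (hS' : IsMinCutD A Y (splitCap H c A Y) S')
    (hsub : S ⊆ S') (W : V)
    (hW' : Sum.inl W ∈ S') (hW'' : Sum.inr W ∉ S')
    (hnot : ¬ (Sum.inl W ∈ S ∧ Sum.inr W ∉ S))
    (p : List (V ⊕ V)) (hp : IsDiPath (splitCap H c A Y) p (Sum.inr Y) (Sum.inl W)) :
    ∃ U : V, Sum.inl U ∈ S ∧ Sum.inr U ∉ S ∧
      (Sum.inl U, Sum.inr U) ∈ p.zip p.tail := by
  have hYS : Sum.inr Y ∈ S := hS.1.1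
  have hWS : Sum.inl W ∉ S := by
    intro h
    apply hW''
    apply hsub
    by_contra h'
    exact hnot ⟨h, h'⟩
  obtain ⟨u, v, hu, hv, hR, hmem⟩ :=
    exists_cross (· ∈ S) (fun u v => splitCap H c A Y u v ≠ 0) p hp.1 _ _ hp.2.1 hp.2.2
      hYS hWS
  obtain ⟨U, hU1, hU2⟩ := hint S hS u hu v (by simpa using hv) hR
  subst hU1; subst hU2
  exact ⟨U, hu, hv, hmem⟩
end

section
/- Let H be a finite undirected graph with distinguished vertices A, Y, positive vertex costs, in which A and Y are non-adjacent and at least one A–Y separator exists. Then there exists a minimum cost A–Y separator O such that for every minimum cost A–Y separator Z, every path in H from Y to a vertex of Z∖O intersects O, and every path in H from A to a vertex of O∖Z intersects Z. -/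
open Finset
open scoped ENNReal

variable {V : Type} [Fintype V] [DecidableEq V]

set_option linter.unusedSectionVars false

noncomputable def bdry (H : SimpleGraph V) (S : Finset V) : Finset V :=
  @Finset.filter _ (fun v => v ∉ S ∧ ∃ u ∈ S, H.Adj u v)
    (fun _ => Classical.propDecidable _) Finset.univ

lemma mem_bdry {H : SimpleGraph V} {S : Finset V} {v : V} :
    v ∈ bdry H S ↔ v ∉ S ∧ ∃ u ∈ S, H.Adj u v := by
  simp [bdry]

noncomputable def reachAvoid (H : SimpleGraph V) (Y : V) (Z : Finset V) : Finset V :=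
  @Finset.filter _ (fun v => ∃ p : H.Walk Y v, ∀ u ∈ p.support, u ∉ Z)
    (fun _ => Classical.propDecidable _) Finset.univ

lemma mem_reachAvoid {H : SimpleGraph V} {Y : V} {Z : Finset V} {v : V} :
    v ∈ reachAvoid H Y Z ↔ ∃ p : H.Walk Y v, ∀ u ∈ p.support, u ∉ Z := by
  simp [reachAvoid]

lemma walk_support_subset (H : SimpleGraph V) {S B : Finset V}
    (hclose : ∀ u v, u ∈ S → u ∉ B → H.Adj u v → v ∉ B → v ∈ S) {x y : V}
    (p : H.Walk x y) (hx : x ∈ S) (hB : ∀ u ∈ p.support, u ∉ B) :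
    ∀ u ∈ p.support, u ∈ S := by
  induction p with
  | nil => intro u hu; simp only [SimpleGraph.Walk.support_nil, List.mem_singleton] at hu; subst hu; exact hx
  | @cons a b d h q ih =>
    intro u hu
    have hb : b ∈ S := by
      refine hclose a b hx (hB a (by simp [SimpleGraph.Walk.support_cons])) h
        (hB b (by simp [SimpleGraph.Walk.support_cons]))
    simp only [SimpleGraph.Walk.support_cons, List.mem_cons] at hu
    rcases hu with rfl | hu
    · exact hx
    · exact ih hb (fun w hw => hB w (by simp [SimpleGraph.Walk.support_cons, hw])) u hu


lemma sepCost_submod {c : V → ℝ≥0∞} {X X' Y' : Finset V} {Y : Finset V}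
    (h1 : X ∪ Y ⊆ X' ∪ Y') (h2 : X ∩ Y ⊆ X' ∩ Y') :
    sepCost c X + sepCost c Y ≤ sepCost c X' + sepCost c Y' := by
  unfold sepCost
  rw [← Finset.sum_union_inter, ← Finset.sum_union_inter (s₁ := X') (s₂ := Y')]
  exact add_le_add (Finset.sum_le_sum_of_subset h1) (Finset.sum_le_sum_of_subset h2)

lemma bdry_union_subset {H : SimpleGraph V} {S T : Finset V} :
    bdry H (S ∩ T) ∪ bdry H (S ∪ T) ⊆ bdry H S ∪ bdry H T := by
  intro v hv
  simp only [Finset.mem_union, mem_bdry] at hv ⊢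
  rcases hv with ⟨hvn, u, hu, hadj⟩ | ⟨hvn, u, hu, hadj⟩
  · simp only [Finset.mem_inter] at hu
    by_cases hvS : v ∈ S
    · exact Or.inr ⟨fun hT => hvn (Finset.mem_inter.2 ⟨hvS, hT⟩), u, hu.2, hadj⟩
    · exact Or.inl ⟨hvS, u, hu.1, hadj⟩
  · simp only [Finset.mem_union, not_or] at hvn
    rcases hu with h | h
    · exact Or.inl ⟨hvn.1, u, h, hadj⟩
    · exact Or.inr ⟨hvn.2, u, h, hadj⟩

lemma bdry_inter_subset {H : SimpleGraph V} {S T : Finset V} :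
    bdry H (S ∩ T) ∩ bdry H (S ∪ T) ⊆ bdry H S ∩ bdry H T := by
  intro v hv
  simp only [Finset.mem_inter, mem_bdry] at hv ⊢
  obtain ⟨⟨_, u, hu, hadj⟩, ⟨hvn, _⟩⟩ := hv
  exact ⟨⟨fun h => hvn (Finset.mem_union_left _ h), u, hu.1, hadj⟩, ⟨fun h => hvn (Finset.mem_union_right _ h), u, hu.2, hadj⟩⟩

lemma isSeparator_bdry {H : SimpleGraph V} {A Y : V} {S : Finset V}
    (hY : Y ∈ S) (hA : A ∉ S) (hA' : A ∉ bdry H S) :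
    IsSeparator H A Y (bdry H S) := by
  refine ⟨hA', fun h => (mem_bdry.1 h).1 hY, fun p => ?_⟩
  by_contra hno
  push_neg at hno
  have := walk_support_subset H (S := S) (B := bdry H S)
    (fun u v hu _ hadj hv => by
      by_contra hvS
      exact hv (mem_bdry.2 ⟨hvS, u, hu, hadj⟩))
    p.reverse hY (fun u hu => hno u (by simpa using hu))
  exact hA (this A (by simp))

lemma reachAvoid_closed {H : SimpleGraph V} {Y : V} {Z : Finset V} {u v : V}
    (hu : u ∈ reachAvoid H Y Z) (hadj : H.Adj u v) (hv : v ∉ Z) :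
    v ∈ reachAvoid H Y Z := by
  obtain ⟨p, hp⟩ := mem_reachAvoid.1 hu
  refine mem_reachAvoid.2 ⟨p.concat hadj, fun w hw => ?_⟩
  simp only [SimpleGraph.Walk.support_concat, List.concat_eq_append, List.mem_append,
    List.mem_singleton] at hw
  rcases hw with hw | rfl
  · exact hp w hw
  · exact hv

lemma bdry_reachAvoid_subset {H : SimpleGraph V} {Y : V} {Z : Finset V} :
    bdry H (reachAvoid H Y Z) ⊆ Z := by
  intro v hv
  obtain ⟨hvn, u, hu, hadj⟩ := mem_bdry.1 hv
  by_contra hvZ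
  exact hvn (reachAvoid_closed hu hadj hvZ)

/-- if `A` and `Y` are non-adjacent and some `A`–`Y` separator exists,
then there is a minimum cost separator `O` with `O ⊴ Z` for every minimum cost
separator `Z`. -/
theorem exists_optimal_minCost_separator (H : SimpleGraph V)
    (A Y : V) (c : V → ℝ≥0∞) (hcpos : ∀ w, 0 < c w) (hcfin : ∀ w, c w ≠ ⊤)
    (hAdj : ¬ H.Adj A Y) (hsep : ∃ Z, IsSeparator H A Y Z) :
    ∃ O, IsMinCostSeparator H A Y c O ∧
      ∀ Z, IsMinCostSeparator H A Y c Z → SepOrder H A Y O Z := by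
  classical
  obtain ⟨Z₁, hZ₁⟩ := hsep
  -- minimum separator cost
  set sep : Finset (Finset V) := Finset.univ.filter (fun Z => IsSeparator H A Y Z) with hsepdef
  have hZ₁mem : Z₁ ∈ sep := by simp [hsepdef, hZ₁]
  obtain ⟨Z₀, hZ₀mem, hZ₀min⟩ := Finset.exists_min_image sep (sepCost c) ⟨Z₁, hZ₁mem⟩
  have hZ₀sep : IsSeparator H A Y Z₀ := by simpa [hsepdef] using hZ₀mem
  set m : ℝ≥0∞ := sepCost c Z₀ with hmdef
  have hm_le : ∀ Z, IsSeparator H A Y Z → m ≤ sepCost c Z := by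
    intro Z hZ
    exact hZ₀min Z (by simp [hsepdef, hZ])
  have hmfin : m ≠ ⊤ := by
    rw [hmdef]
    exact (ENNReal.sum_lt_top.2 (fun w _ => lt_top_iff_ne_top.2 (hcfin w))).ne
  -- the family of "good Y-sides"
  set P : Finset V → Prop := fun S =>
    Y ∈ S ∧ A ∉ S ∧ A ∉ bdry H S ∧ sepCost c (bdry H S) = m with hPdef
  have hPsep : ∀ S, P S → IsSeparator H A Y (bdry H S) := by
    intro S hS
    exact isSeparator_bdry hS.1 hS.2.1 hS.2.2.1
  -- the side associated to a min cost separator is good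
  have hkey : ∀ Z, IsSeparator H A Y Z → sepCost c Z = m → P (reachAvoid H Y Z) := by
    intro Z hZ hZm
    have hYmem : Y ∈ reachAvoid H Y Z := by
      refine mem_reachAvoid.2 ⟨SimpleGraph.Walk.nil, ?_⟩
      intro u hu
      simp only [SimpleGraph.Walk.support_nil, List.mem_singleton] at hu
      subst hu; exact hZ.2.1
    have hAmem : A ∉ reachAvoid H Y Z := by
      intro hA
      obtain ⟨p, hp⟩ := mem_reachAvoid.1 hA
      obtain ⟨w, hw, hwZ⟩ := hZ.2.2 p.reverse
      exact hp w (by simpa using hw) hwZ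
    have hbsub : bdry H (reachAvoid H Y Z) ⊆ Z := bdry_reachAvoid_subset
    have hAb : A ∉ bdry H (reachAvoid H Y Z) := fun h => hZ.1 (hbsub h)
    refine ⟨hYmem, hAmem, hAb, le_antisymm ?_ ?_⟩
    · rw [← hZm]; exact Finset.sum_le_sum_of_subset hbsub
    · exact hm_le _ (isSeparator_bdry hYmem hAmem hAb)
  -- P is closed under intersections
  have hPinter : ∀ S T, P S → P T → P (S ∩ T) := by
    intro S T hS hT
    have hY2 : Y ∈ S ∩ T := Finset.mem_inter.2 ⟨hS.1, hT.1⟩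
    have hYu : Y ∈ S ∪ T := Finset.mem_union_left _ hS.1
    have hA2 : A ∉ S ∩ T := fun h => hS.2.1 (Finset.mem_inter.1 h).1
    have hAu : A ∉ S ∪ T := fun h => (Finset.mem_union.1 h).elim hS.2.1 hT.2.1
    have hAb2 : A ∉ bdry H (S ∩ T) := fun h => by
      have := bdry_union_subset (H := H) (S := S) (T := T) (Finset.mem_union_left _ h)
      exact (Finset.mem_union.1 this).elim hS.2.2.1 hT.2.2.1
    have hAbu : A ∉ bdry H (S ∪ T) := fun h => by
      have := bdry_union_subset (H := H) (S := S) (T := T) (Finset.mem_union_right _ h)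
      exact (Finset.mem_union.1 this).elim hS.2.2.1 hT.2.2.1
    have h2 : m ≤ sepCost c (bdry H (S ∩ T)) :=
      hm_le _ (isSeparator_bdry hY2 hA2 hAb2)
    have hu' : m ≤ sepCost c (bdry H (S ∪ T)) :=
      hm_le _ (isSeparator_bdry hYu hAu hAbu)
    have hsum : sepCost c (bdry H (S ∩ T)) + sepCost c (bdry H (S ∪ T)) ≤ m + m := by
      calc sepCost c (bdry H (S ∩ T)) + sepCost c (bdry H (S ∪ T))
          ≤ sepCost c (bdry H S) + sepCost c (bdry H T) :=
            sepCost_submod bdry_union_subset bdry_inter_subset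
        _ = m + m := by rw [hS.2.2.2, hT.2.2.2]
    have hcost : sepCost c (bdry H (S ∩ T)) = m := by
      refine le_antisymm ?_ h2
      have : sepCost c (bdry H (S ∩ T)) + m ≤ m + m :=
        le_trans (add_le_add le_rfl hu') hsum
      exact (ENNReal.add_le_add_iff_right hmfin).1 this
    exact ⟨hY2, hA2, hAb2, hcost⟩
  -- the family as a finset, and its intersection
  set G : Finset (Finset V) := Finset.univ.filter P with hGdef
  have hGmem : ∀ S, S ∈ G ↔ P S := by intro S; simp [hGdef]
  have hGne : G.Nonempty := ⟨reachAvoid H Y Z₀, (hGmem _).2 (hkey Z₀ hZ₀sep rfl)⟩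
  set Sstar : Finset V := G.inf' hGne id with hSdef
  have hSstarP : P Sstar := by
    have := Finset.inf'_mem (s := {S : Finset V | P S})
      (fun x hx y hy => hPinter x y hx hy) G hGne id (fun i hi => (hGmem i).1 hi)
    exact this
  have hSstar_le : ∀ S ∈ G, Sstar ⊆ S := fun S hS => Finset.inf'_le id hS
  refine ⟨bdry H Sstar, ⟨hPsep _ hSstarP, fun Z' hZ' => hSstarP.2.2.2 ▸ hm_le Z' hZ'⟩, ?_⟩
  intro Z hZ
  have hZsep : IsSeparator H A Y Z := hZ.1
  have hZm : sepCost c Z = m :=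
    le_antisymm (hZ.2 Z₀ hZ₀sep) (hm_le Z hZsep)
  set SZ : Finset V := reachAvoid H Y Z with hSZdef
  have hSZP : P SZ := hkey Z hZsep hZm
  have hsub : Sstar ⊆ SZ := hSstar_le SZ ((hGmem SZ).2 hSZP)
  constructor
  · -- every walk Y → W ∈ Z \ O meets O
    intro W hW p
    by_contra hno
    push_neg at hno
    have hWS : W ∈ Sstar := by
      refine walk_support_subset H (S := Sstar) (B := bdry H Sstar)
        (fun u v hu _ hadj hv => by
          by_contra hvS
          exact hv (mem_bdry.2 ⟨hvS, u, hu, hadj⟩))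
        p hSstarP.1 hno W p.end_mem_support
    have hWZ : W ∈ Z := (Finset.mem_sdiff.1 hW).1
    have : W ∈ SZ := hsub hWS
    obtain ⟨q, hq⟩ := mem_reachAvoid.1 this
    exact hq W q.end_mem_support hWZ
  · -- every walk A → W ∈ O \ Z meets Z
    intro W hW p
    by_contra hno
    push_neg at hno
    obtain ⟨hWO, hWZ⟩ := Finset.mem_sdiff.1 hW
    -- the walk stays outside SZ
    have hstay : ∀ u ∈ p.support, u ∈ SZᶜ := by
      refine walk_support_subset H (S := SZᶜ) (B := Z)
        (fun u v hu huB hadj hv => by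
          rw [Finset.mem_compl] at hu ⊢
          intro hvS
          exact hu (reachAvoid_closed hvS hadj.symm huB))
        p (by rw [Finset.mem_compl]; exact hSZP.2.1) hno
    have hWnS : W ∉ SZ := by
      have := hstay W p.end_mem_support
      rwa [Finset.mem_compl] at this
    obtain ⟨hWn, u, hu, hadj⟩ := mem_bdry.1 hWO
    exact hWnS (reachAvoid_closed (hsub hu) hadj hWZ)
end
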